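/- arXiv:2104.06974 — 8 statements merged into one kernel-verified Lean document; each statement's English description precedes it below -/
import Mathlib

section
/- Let b, c, m be nonnegative integers with m ≤ b − c. Then Σ_{l=0}^{c} (−1)^{c−l} · C(b−m−c+1, b−m−c−l) · C(b−m−l, c−l) = (−1)^c · C(b−m+1, b−m−c) (as an identity of integers). -/
/-- Binomial coefficient of integers with the convention `iC n k = 0` when `k < 0` or `k > n`. -/
def iC (n k : ℤ) : ℤ := if 0 ≤ k ∧ k ≤ n then (n.toNat.choose k.toNat : ℤ) else 0

lemma iC_eq (n k : ℤ) :
    iC n k = if 0 ≤ n ∧ 0 ≤ k then ((n.toNat.choose k.toNat : ℕ) : ℤ) else 0 := by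
  unfold iC
  split_ifs with h1 h2 h2
  · rfl
  · omega
  · have h : n.toNat < k.toNat := by omega
    simp [Nat.choose_eq_zero_of_lt h]
  · rfl

lemma iC_neg_right (n k : ℤ) (h : k < 0) : iC n k = 0 := by
  rw [iC_eq, if_neg (by omega)]

lemma iC_zero_right (n : ℤ) (h : 0 ≤ n) : iC n 0 = 1 := by
  rw [iC_eq, if_pos ⟨h, le_refl 0⟩]; simp

lemma iC_pascal (n k : ℤ) (hn : 1 ≤ n) :
    iC n k = iC (n-1) (k-1) + iC (n-1) k := by
  rcases lt_or_ge k 0 with hk | hk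
  · rw [iC_neg_right _ _ hk, iC_neg_right _ _ (by omega), iC_neg_right _ _ hk]; ring
  rcases eq_or_lt_of_le hk with hk0 | hk1
  · rw [← hk0, iC_zero_right n (by omega), iC_zero_right (n-1) (by omega),
      iC_neg_right (n-1) (0-1) (by omega)]; ring
  · rw [iC_eq, iC_eq, iC_eq,
      if_pos ⟨by omega, hk⟩, if_pos ⟨by omega, by omega⟩, if_pos ⟨by omega, by omega⟩]
    have h1 : n.toNat = (n-1).toNat + 1 := by omega
    have h2 : k.toNat = (k-1).toNat + 1 := by omega
    rw [h1, h2, Nat.choose_succ_succ]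
    push_cast; ring

lemma iC_symm (n k : ℤ) (hn : 0 ≤ n) : iC n k = iC n (n - k) := by
  rw [iC_eq, iC_eq]
  rcases lt_or_ge k 0 with hk | hk
  · rw [if_neg (by omega)]
    rcases lt_or_ge n (n - k) with h | h
    · have : n.toNat < (n-k).toNat := by omega
      rw [if_pos ⟨hn, by omega⟩, Nat.choose_eq_zero_of_lt this]; rfl
    · omega
  rcases le_or_gt k n with hkn | hkn
  · rw [if_pos ⟨hn, hk⟩, if_pos ⟨hn, by omega⟩]
    have h1 : (n-k).toNat = n.toNat - k.toNat := by omega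
    have h2 : k.toNat ≤ n.toNat := by omega
    rw [h1, Nat.choose_symm h2]
  · rw [if_pos ⟨hn, hk⟩, if_neg (by omega)]
    have : n.toNat < k.toNat := by omega
    rw [Nat.choose_eq_zero_of_lt this]; rfl

/-- `Ms a r = Σ_{j=0}^{r} (-1)^j C(a,j) C(a+r-j, r-j)` -/
def Ms (a : ℤ) (r : ℕ) : ℤ :=
  ∑ j ∈ Finset.range (r+1), (-1)^j * iC a j * iC (a + r - j) ((r : ℤ) - j)

/-- `Ls a r = Σ_{j=0}^{r} (-1)^j C(a,j) C(a-1+r-j, r-j)` -/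
def Ls (a : ℤ) (r : ℕ) : ℤ :=
  ∑ j ∈ Finset.range (r+1), (-1)^j * iC a j * iC (a - 1 + r - j) ((r : ℤ) - j)

lemma R1 (a : ℤ) (ha : 0 ≤ a) (r : ℕ) : Ms a (r+1) = Ls a (r+1) + Ms a r := by
  unfold Ms Ls
  have hext : ∑ j ∈ Finset.range (r+1+1), (-1:ℤ)^j * iC a j * iC (a + r - j) ((r:ℤ) - j)
      = ∑ j ∈ Finset.range (r+1), (-1:ℤ)^j * iC a j * iC (a + r - j) ((r:ℤ) - j) := by
    rw [Finset.sum_range_succ]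
    have : iC (a + (r:ℤ) - (r+1)) ((r:ℤ) - (r+1)) = 0 := by
      apply iC_neg_right; push_cast; omega
    push_cast [this]
    ring
  rw [← hext, ← Finset.sum_add_distrib]
  apply Finset.sum_congr rfl
  intro j hj
  simp only [Finset.mem_range] at hj
  by_cases hz : (j : ℤ) ≤ a + r
  · have hp := iC_pascal (a + ((r:ℤ)+1) - j) (((r:ℤ)+1) - j) (by omega)
    have e1 : a + ((r:ℤ)+1) - j - 1 = a + r - j := by ring
    have e2 : ((r:ℤ)+1) - j - 1 = (r:ℤ) - j := by ring
    rw [e1, e2] at hp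
    have e3 : a + ((r:ℤ)+1+1-1) - j = a + ((r:ℤ)+1) - j := by ring
    push_cast
    rw [show a + ((r:ℤ)+1) - j - 1 = a + (r:ℤ) - j by ring] at *
    rw [hp]; ring
  · have hj0 : iC a j = 0 := by
      rw [iC_eq]
      rcases le_or_gt 0 a with h0 | h0
      · have : a.toNat < (j:ℤ).toNat := by omega
        rw [if_pos ⟨h0, by positivity⟩, Nat.choose_eq_zero_of_lt this]; rfl
      · omega
    push_cast [hj0]; ring

lemma R2 (a : ℤ) (ha : 1 ≤ a) (r : ℕ) : Ls a (r+1) = Ms (a-1) (r+1) - Ms (a-1) r := by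
  unfold Ms Ls
  have step : ∀ j ∈ Finset.range (r+1+1),
      (-1:ℤ)^j * iC a j * iC (a - 1 + ((r:ℤ)+1) - j) (((r:ℤ)+1) - j)
      = ((-1:ℤ)^j * iC (a-1) ((j:ℤ)-1) * iC (a - 1 + ((r:ℤ)+1) - j) (((r:ℤ)+1) - j)
        + (-1:ℤ)^j * iC (a-1) j * iC (a - 1 + ((r:ℤ)+1) - j) (((r:ℤ)+1) - j)) := by
    intro j hj
    rw [iC_pascal a j ha]; ring
  push_cast at step ⊢
  rw [Finset.sum_congr rfl step, Finset.sum_add_distrib]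
  have h2 : ∑ j ∈ Finset.range (r+1+1),
      (-1:ℤ)^j * iC (a-1) ((j:ℤ)-1) * iC (a - 1 + ((r:ℤ)+1) - j) (((r:ℤ)+1) - j)
      = - ∑ j ∈ Finset.range (r+1),
          (-1:ℤ)^j * iC (a-1) j * iC ((a-1) + (r:ℤ) - j) ((r:ℤ) - j) := by
    rw [Finset.sum_range_succ']
    have h0 : iC (a-1) ((((0:ℕ)):ℤ) - 1) = 0 := iC_neg_right _ _ (by simp)
    rw [h0, mul_zero, zero_mul, add_zero, ← Finset.sum_neg_distrib]
    apply Finset.sum_congr rfl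
    intro j hj
    push_cast
    have e1 : a - 1 + ((r:ℤ)+1) - ((j:ℤ)+1) = a - 1 + r - j := by ring
    have e2 : ((r:ℤ)+1) - ((j:ℤ)+1) = (r:ℤ) - j := by ring
    have e3 : ((j:ℤ)+1) - 1 = (j:ℤ) := by ring
    rw [e1, e2, e3, pow_succ]
    ring
  rw [h2]; ring

lemma iC_diag (n : ℤ) (hn : 0 ≤ n) : iC n n = 1 := by
  rw [iC_eq, if_pos ⟨hn, hn⟩, Nat.choose_self]; rfl

lemma Ms_zero_left (r : ℕ) : Ms 0 r = 1 := by
  unfold Ms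
  rw [Finset.sum_eq_single 0]
  · simp [iC_zero_right 0 le_rfl, iC_diag (r:ℤ) (by positivity)]
  · intro j hj hj0
    have : iC 0 j = 0 := by
      rw [iC_eq, if_pos ⟨le_rfl, by positivity⟩]
      have : (0:ℤ).toNat < (j:ℤ).toNat := by omega
      rw [Nat.choose_eq_zero_of_lt this]; rfl
    rw [this]; ring
  · intro h; exact absurd (Finset.mem_range.2 (by omega)) h

lemma Ms_zero_right (a : ℤ) (ha : 0 ≤ a) : Ms a 0 = 1 := by
  unfold Ms
  simp [iC_zero_right a ha]

lemma Ms_nat : ∀ (n : ℕ) (r : ℕ), Ms (n : ℤ) r = 1 := by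
  intro n
  induction n with
  | zero => intro r; exact_mod_cast Ms_zero_left r
  | succ n ih =>
    intro r
    induction r with
    | zero => exact Ms_zero_right _ (by positivity)
    | succ r ihr =>
      have hR1 := R1 ((n:ℤ)+1) (by positivity) r
      have hR2 := R2 ((n:ℤ)+1) (by omega) r
      have e : ((n:ℤ)+1) - 1 = (n:ℤ) := by ring
      rw [e] at hR2
      push_cast
      rw [hR1, hR2, ih (r+1), ih r]
      push_cast at ihr
      rw [ihr]; ring

lemma Ms_one (a : ℤ) (ha : 0 ≤ a) (r : ℕ) : Ms a r = 1 := by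
  lift a to ℕ using ha
  exact Ms_nat a r

lemma Ls_zero (a : ℤ) (ha : 1 ≤ a) (r : ℕ) : Ls a (r+1) = 0 := by
  rw [R2 a ha r, Ms_one (a-1) (by omega), Ms_one (a-1) (by omega)]; ring

/-- **Lemma 3.1 (second part).** For nonnegative integers `b, c, m` with `m ≤ b - c`
(encoded as `m + c ≤ b`), we have
`Σ_{l=0}^{c} (−1)^{c−l} C(b−m−c+1, b−m−c−l) C(b−m−l, c−l) = (−1)^c C(b−m+1, b−m−c)`. -/
theorem stmt_1 (b c m : ℕ) (hmc : m + c ≤ b) :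
    ∑ l ∈ Finset.range (c + 1),
      (-1 : ℤ) ^ (c - l) * iC ((b : ℤ) - m - c + 1) ((b : ℤ) - m - c - l) *
        iC ((b : ℤ) - m - l) ((c : ℤ) - l)
      = (-1 : ℤ) ^ c * iC ((b : ℤ) - m + 1) ((b : ℤ) - m - c) := by
  have hcB : (c:ℤ) ≤ (b:ℤ) - (m:ℤ) := by
    have := hmc
    push_cast
    omega
  set B : ℤ := (b:ℤ) - (m:ℤ) with hB
  have key := Ls_zero (B - c + 1) (by omega) c
  unfold Ls at key
  rw [Finset.sum_range_succ'] at key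
  -- Rewrite goal terms
  have e0 : ∀ l ∈ Finset.range (c+1),
      (-1 : ℤ) ^ (c - l) * iC (B - c + 1) (B - c - l) * iC (B - l) ((c : ℤ) - l)
      = (-1:ℤ)^c * -((-1:ℤ)^(l+1) * iC (B - c + 1) ((l:ℕ) + 1 : ℕ)
          * iC ((B - c + 1) - 1 + ((c:ℕ)+1 : ℕ) - ((l:ℕ)+1 : ℕ)) (((c:ℕ)+1 : ℕ) - ((l:ℕ)+1 : ℕ))) := by
    intro l hl
    simp only [Finset.mem_range] at hl
    have h4 : (-1:ℤ)^c * (-1:ℤ)^l = (-1:ℤ)^(c-l) := by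
      rw [← pow_add, show c + l = (c - l) + 2*l from by omega, pow_add, pow_mul]
      norm_num
    have h5 : iC (B - c + 1) (B - c - l) = iC (B - c + 1) ((l:ℤ) + 1) := by
      rw [iC_symm (B - c + 1) (B - c - l) (by omega)]
      congr 1
      ring
    push_cast
    rw [h5,
      show B - c + 1 - 1 + ((c:ℤ)+1) - ((l:ℤ)+1) = B - l by ring,
      show ((c:ℤ)+1) - ((l:ℤ)+1) = (c:ℤ) - l by ring,
      pow_succ, ← h4]
    ring
  rw [Finset.sum_congr rfl e0, ← Finset.mul_sum, Finset.sum_neg_distrib]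
  have e1 : iC (B + 1) (B - c) = iC (B - c + 1 - 1 + ((c:ℕ)+1:ℕ) - ((0:ℕ):ℤ)) (((c:ℕ)+1:ℕ) - ((0:ℕ):ℤ)) := by
    rw [iC_symm (B+1) (B - c) (by omega)]
    push_cast
    congr 1 <;> ring
  rw [e1]
  congr 1
  push_cast at key ⊢
  -- key : Σ + f0 = 0
  have f0 : (-1:ℤ)^(0:ℕ) * iC (B - c + 1) ((0:ℕ):ℤ) = 1 := by
    push_cast
    rw [iC_zero_right (B - c + 1) (by omega)]
    ring
  push_cast at f0
  rw [f0] at key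
  linarith [key]
end

section
/- Let p be an odd prime, t ≥ 1 an integer, and N, M positive integers such that p^t(p−1) divides N − M. Then for every integer a, p^{t+1} divides Σ_{0 ≤ j ≤ N, j ≡ a (mod p−1)} C(N, j) − Σ_{0 ≤ j ≤ M, j ≡ a (mod p−1)} C(M, j). -/
open Finset

namespace Stmt8Aux

variable {p t : ℕ}

lemma pdvd (p t : ℕ) : p ∣ p ^ (t + 1) := dvd_pow_self p (Nat.succ_ne_zero t)

lemma coprime_pm1 (hp : p.Prime) : Nat.Coprime p (p - 1) := by
  have h : p - (p - 1) = 1 := by have := hp.two_le; omega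
  have hd := Nat.dvd_sub (Nat.gcd_dvd_left p (p - 1)) (Nat.gcd_dvd_right p (p - 1))
  rw [h] at hd
  exact Nat.eq_one_of_dvd_one hd

lemma ker_card (hp : p.Prime) :
    Nat.card (ZMod.unitsMap (pdvd p t)).ker = p ^ t := by
  haveI : Fact p.Prime := ⟨hp⟩
  haveI : NeZero (p ^ (t + 1)) := ⟨pow_ne_zero _ hp.pos.ne'⟩
  have h1 : Nat.card ((ZMod (p ^ (t + 1)))ˣ) = p ^ t * (p - 1) := by
    rw [Nat.card_eq_fintype_card, ZMod.card_units_eq_totient,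
      Nat.totient_prime_pow hp (Nat.succ_pos t), Nat.succ_sub_one]
  have h2 : Nat.card ((ZMod (p ^ (t + 1)))ˣ ⧸ (ZMod.unitsMap (pdvd p t)).ker) = p - 1 := by
    rw [Nat.card_congr (QuotientGroup.quotientKerEquivOfSurjective _
      (ZMod.unitsMap_surjective (pdvd p t))).toEquiv]
    rw [Nat.card_eq_fintype_card, ZMod.card_units]
  have h3 := Subgroup.card_eq_card_quotient_mul_card_subgroup (ZMod.unitsMap (pdvd p t)).ker
  rw [h1, h2] at h3
  have hp1 : 0 < p - 1 := by have := hp.two_le; omega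
  have : p ^ t * (p - 1) = Nat.card (ZMod.unitsMap (pdvd p t)).ker * (p - 1) := by
    rw [h3]; ring
  exact (Nat.eq_of_mul_eq_mul_right hp1 this).symm

lemma ker_trivial (hp : p.Prime) {x : (ZMod (p ^ (t + 1)))ˣ}
    (h1 : ZMod.unitsMap (pdvd p t) x = 1) (h2 : x ^ (p - 1) = 1) : x = 1 := by
  have hmem : x ∈ (ZMod.unitsMap (pdvd p t)).ker := h1
  have d1 : orderOf x ∣ p ^ t :=
    (Subgroup.orderOf_dvd_natCard _ hmem).trans (ker_card hp).dvd
  have d2 : orderOf x ∣ p - 1 := orderOf_dvd_iff_pow_eq_one.mpr h2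
  have hc : Nat.Coprime (p ^ t) (p - 1) := (coprime_pm1 hp).pow_left t
  have : orderOf x ∣ Nat.gcd (p ^ t) (p - 1) := Nat.dvd_gcd d1 d2
  rw [hc] at this
  exact orderOf_eq_one_iff.mp (Nat.eq_one_of_dvd_one this)

lemma isUnit_of_cast_ne (hp : p.Prime) {z : ZMod (p ^ (t + 1))}
    (h : ZMod.castHom (pdvd p t) (ZMod p) z ≠ 0) : IsUnit z := by
  haveI : Fact p.Prime := ⟨hp⟩
  haveI : NeZero (p ^ (t + 1)) := ⟨pow_ne_zero _ hp.pos.ne'⟩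
  have hz : ((z.val : ℕ) : ZMod (p ^ (t + 1))) = z := by
    rw [ZMod.natCast_val, ZMod.cast_id]
  have hcast : ZMod.castHom (pdvd p t) (ZMod p) z = ((z.val : ℕ) : ZMod p) := by
    conv_lhs => rw [← hz]
    rw [map_natCast]
  rw [hcast, Ne, ZMod.natCast_eq_zero_iff] at h
  rw [← hz, ZMod.isUnit_iff_coprime]
  exact ((hp.coprime_iff_not_dvd.mpr h).symm).pow_right _

lemma unitsMap_coe (x : (ZMod (p ^ (t + 1)))ˣ) :
    ((ZMod.unitsMap (pdvd p t) x : (ZMod p)ˣ) : ZMod p)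
      = ZMod.castHom (pdvd p t) (ZMod p) (x : ZMod (p ^ (t + 1))) := by
  rw [ZMod.unitsMap_def]
  rfl

lemma sub_one_unit (hp : p.Prime) {x : (ZMod (p ^ (t + 1)))ˣ}
    (hx1 : x ≠ 1) (hx : x ^ (p - 1) = 1) :
    IsUnit ((x : ZMod (p ^ (t + 1))) - 1) := by
  apply isUnit_of_cast_ne hp
  intro h0
  rw [map_sub, map_one, sub_eq_zero] at h0
  apply hx1
  apply ker_trivial hp ?_ hx
  ext
  rw [unitsMap_coe, h0, Units.val_one]

lemma exists_zeta (hp : p.Prime) :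
    ∃ ζ : (ZMod (p ^ (t + 1)))ˣ, orderOf ζ = p - 1 := by
  haveI : Fact p.Prime := ⟨hp⟩
  haveI : NeZero (p ^ (t + 1)) := ⟨pow_ne_zero _ hp.pos.ne'⟩
  obtain ⟨g, hg⟩ := IsCyclic.exists_generator (α := (ZMod p)ˣ)
  have hgord : orderOf g = p - 1 := by
    rw [orderOf_eq_card_of_forall_mem_zpowers hg, Nat.card_eq_fintype_card, ZMod.card_units]
  obtain ⟨u, hu⟩ := ZMod.unitsMap_surjective (pdvd p t) g
  refine ⟨u ^ p ^ t, ?_⟩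
  have hcard : Fintype.card (ZMod (p ^ (t + 1)))ˣ = p ^ t * (p - 1) := by
    rw [ZMod.card_units_eq_totient, Nat.totient_prime_pow hp (Nat.succ_pos t), Nat.succ_sub_one]
  have h1 : (u ^ p ^ t) ^ (p - 1) = 1 := by
    rw [← pow_mul, ← hcard]; exact pow_card_eq_one
  have hfz : ZMod.unitsMap (pdvd p t) (u ^ p ^ t) = g := by
    rw [map_pow, hu]
    have hdvd : (p - 1) ∣ p ^ t - 1 := by
      simpa using Nat.sub_dvd_pow_sub_pow p 1 t
    have hpt : 1 ≤ p ^ t := Nat.one_le_pow _ _ hp.pos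
    have hone : g ^ (p ^ t - 1) = 1 :=
      orderOf_dvd_iff_pow_eq_one.mp (hgord ▸ hdvd)
    calc g ^ p ^ t = g ^ (p ^ t - 1) * g := by
          rw [← pow_succ]; congr 1; omega
    _ = g := by rw [hone, one_mul]
  have hd1 : orderOf (u ^ p ^ t) ∣ p - 1 := orderOf_dvd_iff_pow_eq_one.mpr h1
  have hd2 : (p - 1) ∣ orderOf (u ^ p ^ t) := by
    rw [← hgord, ← hfz]
    exact orderOf_map_dvd _ _
  exact Nat.dvd_antisymm hd1 hd2


lemma sum_pow_eq (hp : p.Prime) {ζ : (ZMod (p ^ (t + 1)))ˣ}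
    (hζ : orderOf ζ = p - 1) (m : ℤ) :
    (∑ i ∈ range (p - 1), ((ζ ^ m : (ZMod (p ^ (t + 1)))ˣ) : ZMod (p ^ (t + 1))) ^ i)
      = if ((p : ℤ) - 1) ∣ m then ((p - 1 : ℕ) : ZMod (p ^ (t + 1))) else 0 := by
  have hcast : ((p : ℤ) - 1) = ((p - 1 : ℕ) : ℤ) := by
    have := hp.two_le; push_cast; omega
  have hz1 : ζ ^ (p - 1 : ℕ) = 1 := hζ ▸ pow_orderOf_eq_one ζ
  split_ifs with h
  · have hone : ζ ^ m = 1 := by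
      rw [← orderOf_dvd_iff_zpow_eq_one, hζ, ← hcast]
      exact h
    simp [hone]
  · set w := ζ ^ m with hw
    have hw1 : w ≠ 1 := by
      intro hweq
      apply h
      have := orderOf_dvd_iff_zpow_eq_one.mpr hweq
      rw [hζ] at this
      rwa [hcast]
    have hwp : w ^ (p - 1 : ℕ) = 1 := by
      rw [hw, ← zpow_natCast (ζ ^ m), ← zpow_mul, mul_comm, zpow_mul,
        zpow_natCast, hz1, one_zpow]
    have hunit := sub_one_unit hp hw1 hwp
    have hgeom := geom_sum_mul ((w : ZMod (p ^ (t + 1)))) (p - 1)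
    have hz : ((w : ZMod (p ^ (t + 1)))) ^ (p - 1) - 1 = 0 := by
      rw [← Units.val_pow_eq_pow_val, hwp, Units.val_one, sub_self]
    rw [hz] at hgeom
    exact (IsUnit.mul_left_eq_zero hunit).mp hgeom


lemma main (p : ℕ) (hp : p.Prime) (hodd : Odd p) (t : ℕ) (ht : 1 ≤ t)
    (N M : ℕ) (hN : 0 < N) (hM : 0 < M) (hMN : M ≤ N)
    (hdvd : ((p : ℤ) ^ t * ((p : ℤ) - 1)) ∣ ((N : ℤ) - (M : ℤ))) (a : ℤ) :
    ((p : ℤ) ^ (t + 1)) ∣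
      ((∑ j ∈ Finset.filter (fun j : ℕ => (j : ℤ) % ((p : ℤ) - 1) = a % ((p : ℤ) - 1))
            (Finset.range (N + 1)), (N.choose j : ℤ))
        - ∑ j ∈ Finset.filter (fun j : ℕ => (j : ℤ) % ((p : ℤ) - 1) = a % ((p : ℤ) - 1))
            (Finset.range (M + 1)), (M.choose j : ℤ)) := by
  haveI : Fact p.Prime := ⟨hp⟩
  haveI : NeZero (p ^ (t + 1)) := ⟨pow_ne_zero _ hp.pos.ne'⟩
  set R := ZMod (p ^ (t + 1))
  have hpcast : ((p : ℤ)) ^ (t + 1) = ((p ^ (t + 1) : ℕ) : ℤ) := by push_cast; ring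
  rw [hpcast, ← ZMod.intCast_zmod_eq_zero_iff_dvd]
  push_cast
  rw [sub_eq_zero]
  -- set up ζ
  obtain ⟨ζ, hζ⟩ := exists_zeta (t := t) hp
  have hz1 : ζ ^ (p - 1 : ℕ) = 1 := hζ ▸ pow_orderOf_eq_one ζ
  have hcard : Fintype.card Rˣ = p ^ t * (p - 1) := by
    rw [ZMod.card_units_eq_totient, Nat.totient_prime_pow hp (Nat.succ_pos t), Nat.succ_sub_one]
  -- combining powers of ζ
  have comb : ∀ (i j : ℕ), (((ζ ^ (-a) : Rˣ) : R)) ^ i * (((ζ : R)) ^ i) ^ j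
      = (((ζ ^ ((j : ℤ) - a) : Rˣ) : R)) ^ i := by
    intro i j
    have hu : (ζ ^ (-a)) ^ i * (ζ ^ i) ^ j = (ζ ^ ((j : ℤ) - a)) ^ i := by
      rw [← zpow_natCast (ζ ^ (-a)) i, ← zpow_natCast ζ i,
        ← zpow_natCast (ζ ^ (i : ℤ)) j, ← zpow_natCast (ζ ^ ((j : ℤ) - a)) i,
        ← zpow_mul, ← zpow_mul, ← zpow_mul, ← zpow_add]
      congr 1
      ring
    calc (((ζ ^ (-a) : Rˣ) : R)) ^ i * (((ζ : R)) ^ i) ^ j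
        = ((((ζ ^ (-a)) ^ i * (ζ ^ i) ^ j : Rˣ)) : R) := by
          rw [Units.val_mul, Units.val_pow_eq_pow_val, Units.val_pow_eq_pow_val,
            Units.val_pow_eq_pow_val]
      _ = (((ζ ^ ((j : ℤ) - a) : Rˣ) : R)) ^ i := by
          rw [hu, Units.val_pow_eq_pow_val]
  -- the key filter identity
  have key : ∀ n : ℕ,
      ∑ i ∈ range (p - 1), (((ζ ^ (-a) : Rˣ) : R)) ^ i * (1 + ((ζ : R)) ^ i) ^ n
        = ((p - 1 : ℕ) : R) * ∑ j ∈ Finset.filter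
            (fun j : ℕ => (j : ℤ) % ((p : ℤ) - 1) = a % ((p : ℤ) - 1))
            (Finset.range (n + 1)), (n.choose j : R) := by
    intro n
    have expand : ∀ i : ℕ, (1 + ((ζ : R)) ^ i) ^ n
        = ∑ j ∈ range (n + 1), (((ζ : R)) ^ i) ^ j * (n.choose j : R) := by
      intro i
      rw [show (1 : R) + ((ζ : R)) ^ i = ((ζ : R)) ^ i + 1 from add_comm _ _, add_pow]
      simp
    calc ∑ i ∈ range (p - 1), (((ζ ^ (-a) : Rˣ) : R)) ^ i * (1 + ((ζ : R)) ^ i) ^ n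
        = ∑ i ∈ range (p - 1), ∑ j ∈ range (n + 1),
            (((ζ ^ ((j : ℤ) - a) : Rˣ) : R)) ^ i * (n.choose j : R) := by
          refine sum_congr rfl fun i _ => ?_
          rw [expand i, mul_sum]
          refine sum_congr rfl fun j _ => ?_
          rw [← mul_assoc, comb i j]
      _ = ∑ j ∈ range (n + 1), (∑ i ∈ range (p - 1),
            (((ζ ^ ((j : ℤ) - a) : Rˣ) : R)) ^ i) * (n.choose j : R) := by
          rw [Finset.sum_comm]
          exact sum_congr rfl fun j _ => (sum_mul _ _ _).symm
      _ = ∑ j ∈ range (n + 1), (if (j : ℤ) % ((p : ℤ) - 1) = a % ((p : ℤ) - 1)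
            then ((p - 1 : ℕ) : R) * (n.choose j : R) else 0) := by
          refine sum_congr rfl fun j _ => ?_
          rw [sum_pow_eq hp hζ]
          have hiff : (((p : ℤ) - 1) ∣ ((j : ℤ) - a)) ↔
              ((j : ℤ) % ((p : ℤ) - 1) = a % ((p : ℤ) - 1)) := by
            rw [dvd_sub_comm]
            exact (Int.modEq_iff_dvd).symm
          rw [if_congr hiff rfl rfl, ite_mul, zero_mul]
      _ = ((p - 1 : ℕ) : R) * ∑ j ∈ Finset.filter
            (fun j : ℕ => (j : ℤ) % ((p : ℤ) - 1) = a % ((p : ℤ) - 1))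
            (Finset.range (n + 1)), (n.choose j : R) := by
          rw [mul_sum, Finset.sum_filter]
  -- nat divisibility
  have hnat : (p ^ t * (p - 1)) ∣ (N - M) := by
    have h1 : ((p ^ t * (p - 1) : ℕ) : ℤ) ∣ ((N - M : ℕ) : ℤ) := by
      push_cast [Nat.cast_sub hMN, Nat.cast_sub hp.one_le]
      exact hdvd
    exact_mod_cast h1
  -- termwise equality of powers
  have pow_eq : ∀ i : ℕ, (1 + ((ζ : R)) ^ i) ^ N = (1 + ((ζ : R)) ^ i) ^ M := by
    intro i
    set x : R := 1 + ((ζ : R)) ^ i with hxdef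
    by_cases hx0 : x = 0
    · rw [hx0, zero_pow hN.ne', zero_pow hM.ne']
    · have hux : IsUnit x := by
        apply isUnit_of_cast_ne hp
        intro h0
        apply hx0
        have hcastz : ZMod.castHom (pdvd p t) (ZMod p) ((ζ : R)) ^ i = -1 := by
          rw [hxdef, map_add, map_one, map_pow] at h0
          linear_combination h0
        have h1 : ZMod.unitsMap (pdvd p t) (ζ ^ (2 * i)) = 1 := by
          ext
          rw [unitsMap_coe, Units.val_one, Units.val_pow_eq_pow_val, map_pow,
            mul_comm 2 i, pow_mul, hcastz]
          ring
        have h2 : (ζ ^ (2 * i)) ^ (p - 1) = 1 := by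
          rw [← pow_mul, mul_comm (2 * i) (p - 1), pow_mul, hz1, one_pow]
        have h3 : ζ ^ (2 * i) = 1 := ker_trivial hp h1 h2
        have h5 : ζ ^ i ≠ 1 := by
          intro hcon
          have hcon' : ((ζ : R)) ^ i = 1 := by
            have := congrArg Units.val hcon
            rwa [Units.val_pow_eq_pow_val, Units.val_one] at this
          rw [← map_pow, hcon', map_one] at hcastz
          have h2z : (2 : ZMod p) = 0 := by linear_combination hcastz
          have hdvd2 : p ∣ 2 := by
            have : ((2 : ℕ) : ZMod p) = 0 := by exact_mod_cast h2z
            exact (ZMod.natCast_eq_zero_iff 2 p).mp this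
          have hp2 : p ≤ 2 := Nat.le_of_dvd (by norm_num) hdvd2
          obtain ⟨k, hk⟩ := hodd
          have := hp.two_le
          omega
        have h6 : (ζ ^ i) ^ (p - 1) = 1 := by
          rw [← pow_mul, mul_comm i (p - 1), pow_mul, hz1, one_pow]
        have h7 : IsUnit ((((ζ ^ i : Rˣ)) : R) - 1) := sub_one_unit hp h5 h6
        have h3' : ((ζ : R)) ^ (2 * i) = 1 := by
          have := congrArg Units.val h3
          rwa [Units.val_pow_eq_pow_val, Units.val_one] at this
        have h4 : ((((ζ ^ i : Rˣ)) : R) - 1) * ((((ζ ^ i : Rˣ)) : R) + 1) = 0 := by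
          simp only [Units.val_pow_eq_pow_val]
          calc (((ζ : R)) ^ i - 1) * (((ζ : R)) ^ i + 1)
              = ((ζ : R)) ^ (2 * i) - 1 := by rw [two_mul]; ring
            _ = 0 := by rw [h3', sub_self]
        have h8 : (((ζ ^ i : Rˣ)) : R) + 1 = 0 := (h7.mul_right_eq_zero).mp h4
        simp only [Units.val_pow_eq_pow_val] at h8
        rw [hxdef]
        linear_combination h8
      obtain ⟨u, hu⟩ := hux
      obtain ⟨k, hk⟩ := hnat
      have hcardpow : u ^ (N - M) = 1 := by
        rw [hk, pow_mul, ← hcard, pow_card_eq_one, one_pow]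
      have hxone : x ^ (N - M) = 1 := by
        rw [← hu, ← Units.val_pow_eq_pow_val, hcardpow, Units.val_one]
      calc x ^ N = x ^ (M + (N - M)) := by congr 1; omega
        _ = x ^ M * x ^ (N - M) := pow_add x M (N - M)
        _ = x ^ M := by rw [hxone, mul_one]
  -- assemble
  have hsum : ∑ i ∈ range (p - 1), (((ζ ^ (-a) : Rˣ) : R)) ^ i * (1 + ((ζ : R)) ^ i) ^ N
      = ∑ i ∈ range (p - 1), (((ζ ^ (-a) : Rˣ) : R)) ^ i * (1 + ((ζ : R)) ^ i) ^ M :=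
    sum_congr rfl fun i _ => by rw [pow_eq i]
  have heq := (key N).symm.trans (hsum.trans (key M))
  have punit : IsUnit ((p - 1 : ℕ) : R) := by
    rw [show ((p - 1 : ℕ) : R) = ((p - 1 : ℕ) : ZMod (p ^ (t + 1))) from rfl,
      ZMod.isUnit_iff_coprime]
    exact ((coprime_pm1 hp).symm).pow_right _
  exact punit.mul_left_cancel heq

end Stmt8Aux


/-- **Key congruence behind Lemma 3.3.** Let `p` be an odd prime, `t ≥ 1`, and let `N, M` be
positive integers with `p^t(p−1) ∣ N − M`. Then for every integer `a`,
`p^{t+1}` divides `Σ_{0 ≤ j ≤ N, j ≡ a (mod p−1)} C(N,j) − Σ_{0 ≤ j ≤ M, j ≡ a (mod p−1)} C(M,j)`. -/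
theorem stmt_8 (p : ℕ) (hp : p.Prime) (hodd : Odd p) (t : ℕ) (ht : 1 ≤ t)
    (N M : ℕ) (hN : 0 < N) (hM : 0 < M)
    (hdvd : ((p : ℤ) ^ t * ((p : ℤ) - 1)) ∣ ((N : ℤ) - (M : ℤ))) (a : ℤ) :
    ((p : ℤ) ^ (t + 1)) ∣
      ((∑ j ∈ Finset.filter (fun j : ℕ => (j : ℤ) % ((p : ℤ) - 1) = a % ((p : ℤ) - 1))
            (Finset.range (N + 1)), (N.choose j : ℤ))
        - ∑ j ∈ Finset.filter (fun j : ℕ => (j : ℤ) % ((p : ℤ) - 1) = a % ((p : ℤ) - 1))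
            (Finset.range (M + 1)), (M.choose j : ℤ)) := by
  rcases le_total M N with h | h
  · exact Stmt8Aux.main p hp hodd t ht N M hN hM h hdvd a
  · have hdvd' : ((p : ℤ) ^ t * ((p : ℤ) - 1)) ∣ ((M : ℤ) - (N : ℤ)) := by
      have := hdvd.neg_right
      rwa [neg_sub] at this
    have := Stmt8Aux.main p hp hodd t ht M N hM hN h hdvd' a
    have h2 := this.neg_right
    rwa [neg_sub] at h2
end

section
/- Assume additionally 1 ≤ c ≤ p−2, 0 ≤ m ≤ p−1 and (b, m) ≠ (p, 0). If 0 ≤ m ≤ l ≤ b−c and 0 ≤ j ≤ c−1, then ν_p( C(r−l, b−m+j(p−1)) ) = 1 and, after clearing the unit denominators, C(b−m−c, l−m) · C(b−m, c) · C(r−l, b−m+j(p−1)) ≡ (−1)^{l−m} · p · C(b−m, j) · C(p−1+m−l, c−1−j) modulo p^2. (Here C(b−m−c, l−m) and C(b−m, c) are units modulo p, so this is equivalent to the statement C(r−l, b−m+j(p−1))/p ≡ (−1)^{l−m} C(b−m, j) C(p−1+m−l, c−1−j) / ( C(b−m−c, l−m) C(b−m, c) ) modulo p.) -/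
open Finset Nat

lemma fact_eq_fact_mul_prod (N M : ℕ) (h : N ≤ M) :
    M ! = N ! * ∏ x ∈ Ico (N+1) (M+1), x := by
  rw [← prod_Ico_id_eq_factorial, ← prod_Ico_id_eq_factorial,
    prod_Ico_consecutive _ (Nat.succ_le_succ (Nat.zero_le N)) (Nat.succ_le_succ h)]

lemma block_cast (p Q u v : ℕ) :
    ((∏ x ∈ Ico (Q*p+u) (Q*p+v), x : ℕ) : ZMod p) = ((∏ x ∈ Ico u v, x : ℕ) : ZMod p) := by
  push_cast
  rw [prod_Ico_eq_prod_range, prod_Ico_eq_prod_range]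
  have h : Q*p+v - (Q*p+u) = v - u := by omega
  rw [h]
  apply Finset.prod_congr rfl
  intro i _
  push_cast [ZMod.natCast_self]
  ring

lemma fact_cast_ne_zero (p : ℕ) [hp : Fact p.Prime] (x : ℕ) (hx : x < p) :
    ((x ! : ℕ) : ZMod p) ≠ 0 := by
  rw [Ne, ZMod.natCast_eq_zero_iff]
  intro h
  exact absurd (hp.out.dvd_factorial.mp h) (by omega)

lemma anton (p : ℕ) [hp : Fact p.Prime] (q s : ℕ) (hs : s < p) :
    ∃ W : ℕ, (q * p + s)! = p ^ q * q ! * s ! * W ∧ (W : ZMod p) = (-1) ^ q := by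
  induction q with
  | zero => exact ⟨1, by simp⟩
  | succ q ih =>
    obtain ⟨W, hW, hWc⟩ := ih
    have hp1 : 1 ≤ p := hp.out.one_lt.le
    have h1 : q * p + s ≤ (q+1) * p + s := by nlinarith
    have hsplit := fact_eq_fact_mul_prod (q*p+s) ((q+1)*p+s) h1
    have hA : q*p+s+1 ≤ (q+1)*p := by nlinarith
    have hsplit2 : (∏ x ∈ Ico (q*p+s+1) ((q+1)*p+s+1), x)
        = (∏ x ∈ Ico (q*p+s+1) ((q+1)*p), x) * ((q+1)*p) *
          ∏ x ∈ Ico ((q+1)*p+1) ((q+1)*p+s+1), x := by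
      rw [← prod_Ico_consecutive (fun x => x) (le_trans hA (Nat.le_succ _)) (by omega)]
      rw [← prod_Ico_succ_top hA]
    set B1 := ∏ x ∈ Ico (q*p+s+1) ((q+1)*p), x with hB1
    set B2 := ∏ x ∈ Ico ((q+1)*p+1) ((q+1)*p+s+1), x with hB2
    refine ⟨W * (B1 * B2), ?_, ?_⟩
    · rw [hsplit, hW, hsplit2, Nat.factorial_succ]
      ring
    · -- casts
      have hc1 : ((B1 : ℕ) : ZMod p) = ((∏ x ∈ Ico (s+1) p, x : ℕ) : ZMod p) := by
        have : (q+1)*p = q*p+p := by ring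
        rw [hB1, this]
        exact block_cast p q (s+1) p
      have hc2 : ((B2 : ℕ) : ZMod p) = ((s ! : ℕ) : ZMod p) := by
        rw [hB2, ← prod_Ico_id_eq_factorial s]
        have e1 : (q+1)*p+1 = (q+1)*p+1 := rfl
        exact block_cast p (q+1) 1 (s+1)
      have hfact : s ! * (∏ x ∈ Ico (s+1) p, x) = (p-1)! := by
        have hpp : p - 1 + 1 = p := by omega
        have := fact_eq_fact_mul_prod s (p-1) (by omega)
        rw [this, hpp]
      have hwil : (((p-1)! : ℕ) : ZMod p) = -1 := ZMod.wilsons_lemma p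
      have hsne : ((s ! : ℕ) : ZMod p) ≠ 0 := fact_cast_ne_zero p s hs
      apply mul_right_cancel₀ hsne
      push_cast
      rw [mul_assoc, mul_comm (B1 : ZMod p) (B2 : ZMod p)]
      calc (W : ZMod p) * ((B2 : ZMod p) * (B1 : ZMod p) * (s ! : ZMod p))
          = (W : ZMod p) * ((B2 : ZMod p) * ((s ! : ZMod p) * (B1 : ZMod p))) := by ring
        _ = (-1)^q * ((s ! : ZMod p) * (((p-1)! : ℕ) : ZMod p)) := by
            rw [hWc, hc2, hc1]
            push_cast [← hfact]
            ring
        _ = (-1)^(q+1) * (s ! : ZMod p) := by rw [hwil]; ring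

lemma wilson_aux (p : ℕ) [hp : Fact p.Prime] : ∀ s, s ≤ p - 1 →
    ((s ! : ℕ) : ZMod p) * (((p - 1 - s)! : ℕ) : ZMod p) = (-1) ^ (s+1) := by
  intro s
  induction s with
  | zero => intro _; simpa using ZMod.wilsons_lemma p
  | succ s ih =>
    intro hs
    have hs' : s ≤ p - 1 := by omega
    have h1 : p - 1 - s = (p - 1 - (s+1)) + 1 := by omega
    have ihe := ih hs'
    rw [h1, Nat.factorial_succ] at ihe
    have hcast : ((p - 1 - (s+1) : ℕ) : ZMod p) + 1 = -((s : ZMod p) + 1) := by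
      have h2 : (p - 1 - (s+1) + 1) + (s+1) = p := by omega
      have h3 := congrArg (Nat.cast : ℕ → ZMod p) h2
      push_cast at h3 ⊢
      linear_combination h3 + ZMod.natCast_self p
    push_cast at ihe
    rw [hcast] at ihe
    rw [Nat.factorial_succ]
    push_cast
    linear_combination -ihe

lemma lucas_zero (p : ℕ) [hp : Fact p.Prime] (a₀ k₀ c v : ℕ) (h1 : a₀ < k₀) (h2 : k₀ < p) :
    p ∣ (a₀ + c * p).choose (k₀ + v * p) := by
  have ha : a₀ < p := lt_trans h1 h2
  have hmod := Choose.choose_modEq_choose_mod_mul_choose_div_nat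
    (p := p) (n := a₀ + c * p) (k := k₀ + v * p)
  rw [Nat.add_mul_mod_self_right, Nat.add_mul_mod_self_right,
    Nat.mod_eq_of_lt ha, Nat.mod_eq_of_lt h2, Nat.choose_eq_zero_of_lt h1, zero_mul] at hmod
  exact (Nat.modEq_zero_iff_dvd).mp hmod

lemma key (p : ℕ) [hp : Fact p.Prime] (a₀ k₀ j e₁ : ℕ)
    (h1 : a₀ < k₀) (h2 : k₀ < p) (hc : j + e₁ + 1 < p) :
    ∃ Q : ℕ, (a₀ + (j+e₁+1) * p).choose (k₀ + j * p) = p * Q ∧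
      ¬ p ∣ Q ∧
      ((Q : ZMod p) * ((j ! : ℕ) * (k₀ ! : ℕ) * ((e₁ ! : ℕ) * (((p + a₀ - k₀)! : ℕ)))) =
        -((((j+e₁+1)! : ℕ) : ZMod p) * ((a₀ ! : ℕ) : ZMod p))) := by
  set c := j + e₁ + 1 with hcdef
  set e₀ := p + a₀ - k₀ with he₀
  set n := a₀ + c * p with hn
  set k := k₀ + j * p with hk
  have ha : a₀ < p := lt_trans h1 h2
  have he₀1 : 1 ≤ e₀ := by omega
  have he₀p : e₀ < p := by omega
  have hkn : k ≤ n := by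
    have : n = k + (e₀ + e₁ * p) := by rw [hn, hk, hcdef]; ring_nf; omega
    omega
  have hnk : n - k = e₀ + e₁ * p := by
    have : n = k + (e₀ + e₁ * p) := by rw [hn, hk, hcdef]; ring_nf; omega
    omega
  have hdvd : p ∣ n.choose k := lucas_zero p a₀ k₀ c j h1 h2
  refine ⟨n.choose k / p, (Nat.mul_div_cancel' hdvd).symm, ?_⟩
  set Q := n.choose k / p with hQ
  have hQeq : n.choose k = p * Q := (Nat.mul_div_cancel' hdvd).symm
  obtain ⟨W₁, hW₁, hW₁c⟩ := anton p c a₀ ha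
  obtain ⟨W₂, hW₂, hW₂c⟩ := anton p j k₀ h2
  obtain ⟨W₃, hW₃, hW₃c⟩ := anton p e₁ e₀ he₀p
  have hmain := Nat.choose_mul_factorial_mul_factorial hkn
  rw [hQeq, hnk] at hmain
  rw [show k = j * p + k₀ by omega, show e₀ + e₁ * p = e₁ * p + e₀ by ring] at hmain
  rw [hW₂, hW₃, show n = c * p + a₀ by omega, hW₁] at hmain
  have hcanc : Q * ((j ! * k₀ !) * (e₁ ! * e₀ !) * (W₂ * W₃)) = c ! * a₀ ! * W₁ := by
    apply Nat.eq_of_mul_eq_mul_left (show 0 < p ^ c from pow_pos hp.out.pos c)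
    calc p ^ c * (Q * ((j ! * k₀ !) * (e₁ ! * e₀ !) * (W₂ * W₃)))
        = p * Q * (p ^ j * j ! * k₀ ! * W₂) * (p ^ e₁ * e₁ ! * e₀ ! * W₃) := by
          rw [hcdef]; ring
      _ = p ^ c * (c ! * a₀ ! * W₁) := by rw [hmain]; ring
  have hcast := congrArg (Nat.cast : ℕ → ZMod p) hcanc
  push_cast at hcast
  rw [hW₁c, hW₂c, hW₃c] at hcast
  have hQne : ¬ p ∣ Q := by
    intro hpd
    have : (Q : ZMod p) = 0 := (ZMod.natCast_eq_zero_iff _ _).mpr hpd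
    rw [this, zero_mul] at hcast
    have hc' : ((c ! : ℕ) : ZMod p) * ((a₀ ! : ℕ) : ZMod p) * ((-1 : ZMod p) ^ c) = 0 := by
      linear_combination -hcast
    have h1' := fact_cast_ne_zero p c hc
    have h2' := fact_cast_ne_zero p a₀ ha
    have h3' : ((-1 : ZMod p) ^ c) ≠ 0 := pow_ne_zero _ (by
      simp only [ne_eq, neg_eq_zero]
      exact one_ne_zero)
    exact (mul_ne_zero (mul_ne_zero h1' h2') h3') hc'
  refine ⟨hQne, ?_⟩
  -- from hcast : Q * (j! k₀!) * (e₁! e₀!) * ((-1)^j (-1)^e₁) = c! a₀! (-1)^c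
  have hsq : ((-1 : ZMod p) ^ (j + e₁)) * ((-1 : ZMod p) ^ (j + e₁)) = 1 := by
    rw [← pow_add]
    exact Even.neg_one_pow ⟨j + e₁, rfl⟩
  calc (Q : ZMod p) * ((j ! : ℕ) * (k₀ ! : ℕ) * ((e₁ ! : ℕ) * ((e₀ ! : ℕ) : ZMod p)))
      = (Q : ZMod p) * ((j ! : ℕ) * (k₀ ! : ℕ) * ((e₁ ! : ℕ) * ((e₀ ! : ℕ) : ZMod p))) *
        (((-1 : ZMod p) ^ (j + e₁)) * ((-1 : ZMod p) ^ (j + e₁))) := by rw [hsq, mul_one]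
    _ = (((c ! : ℕ) : ZMod p) * (a₀ ! : ℕ) * (-1) ^ c) * ((-1 : ZMod p) ^ (j + e₁)) := by
        rw [← hcast]; ring
    _ = -(((c ! : ℕ) : ZMod p) * ((a₀ ! : ℕ) : ZMod p)) := by
        rw [hcdef, pow_succ]
        linear_combination (-(((c ! : ℕ) : ZMod p) * ((a₀ ! : ℕ) : ZMod p))) * hsq

lemma choose_id (P i : ℕ) (hi : 1 ≤ i) : P * (P-1).choose (i-1) = P.choose i * i := by
  cases P with
  | zero => simp [Nat.choose_eq_zero_of_lt hi]
  | succ P' =>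
    have := Nat.add_one_mul_choose_eq P' (i-1)
    rw [show i - 1 + 1 = i by omega] at this
    simpa using this

lemma stepA (p : ℕ) [hp : Fact p.Prime] (a₀ k₀ j c P : ℕ) (hdvd : p^2 ∣ P)
    (h1 : a₀ < k₀) (h2 : k₀ < p) (hj : j < p) :
    ((a₀ + c * p + P).choose (k₀ + j * p) : ZMod (p^2)) =
      ((a₀ + c * p).choose (k₀ + j * p) : ZMod (p^2)) := by
  set n := a₀ + c * p with hn
  set k := k₀ + j * p with hk
  rw [show n + P = P + n by ring, Nat.add_choose_eq]
  push_cast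
  rw [Finset.sum_eq_single_of_mem ((0 : ℕ), k)
    (Finset.HasAntidiagonal.mem_antidiagonal.mpr (by simp)) ?_]
  · simp
  rintro ⟨i, w⟩ hb hbne
  have hsum : i + w = k := Finset.HasAntidiagonal.mem_antidiagonal.mp hb
  simp only []
  have hi1 : 1 ≤ i := by
    rcases Nat.eq_zero_or_pos i with h | h
    · exfalso; apply hbne
      have : w = k := by omega
      rw [h, this]
    · exact h
  have hiden := choose_id P i hi1
  by_cases hpi : p ∣ i
  · -- p ∣ choose P i  and p ∣ choose n w
    obtain ⟨u, hu⟩ := hpi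
    have hu1 : 1 ≤ u := by
      rcases Nat.eq_zero_or_pos u with h | h
      · subst h
        simp at hu
        omega
      · exact h
    have hcomm : p * j = j * p := Nat.mul_comm p j
    have huj : u ≤ j := by
      by_contra hgt
      push_neg at hgt
      have h6 : p * j + p ≤ p * u := by
        calc p * j + p = p * (j + 1) := by ring
          _ ≤ p * u := Nat.mul_le_mul_left p (by omega)
      omega
    have hup : ¬ p ∣ u := by
      intro h
      have : p ≤ u := Nat.le_of_dvd (by omega) h
      omega
    have hd1 : p ∣ P.choose i := by
      have h3 : p * p ∣ P.choose i * (p * u) := by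
        rw [← hu, ← pow_two]
        exact hiden ▸ Dvd.dvd.mul_right hdvd _
      have h4 : p ∣ P.choose i * u := by
        apply (Nat.mul_dvd_mul_iff_right hp.out.pos).mp
        rw [show P.choose i * u * p = P.choose i * (p * u) by ring]
        exact h3
      exact (Nat.Coprime.dvd_of_dvd_mul_right
        ((Nat.Prime.coprime_iff_not_dvd hp.out).mpr hup) h4)
    have hd2 : p ∣ n.choose w := by
      have hb2 : w = k₀ + (j - u) * p := by
        have h5 : p * u + w = k₀ + j * p := by omega
        have h6 : j * p = u * p + (j - u) * p := by
          rw [← Nat.add_mul]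
          congr 1
          omega
        have h7 : p * u = u * p := Nat.mul_comm _ _
        omega
      rw [hb2]
      exact lucas_zero p a₀ k₀ c (j - u) h1 h2
    have hdd : (p^2 : ℕ) ∣ P.choose i * n.choose w := by
      rw [pow_two]
      exact mul_dvd_mul hd1 hd2
    have hfin : ((P.choose i * n.choose w : ℕ) : ZMod (p^2)) = 0 :=
      (ZMod.natCast_eq_zero_iff _ _).mpr hdd
    push_cast at hfin
    exact hfin
  · -- p^2 ∣ choose P i
    have hd1 : p^2 ∣ P.choose i := by
      have h3 : p^2 ∣ P.choose i * i := hiden ▸ Dvd.dvd.mul_right hdvd _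
      exact Nat.Coprime.dvd_of_dvd_mul_right
        (Nat.Coprime.pow_left 2 ((Nat.Prime.coprime_iff_not_dvd hp.out).mpr hpi)) h3
    have hz : ((P.choose i : ℕ) : ZMod (p^2)) = 0 := (ZMod.natCast_eq_zero_iff _ _).mpr hd1
    rw [hz, zero_mul]

lemma iC_eq_nat (n k : ℤ) (N K : ℕ) (hN : n = (N:ℤ)) (hK : k = (K:ℤ)) (hKN : K ≤ N) :
    iC n k = (N.choose K : ℤ) := by
  subst hN hK
  rw [iC, if_pos ⟨Int.natCast_nonneg K, by exact_mod_cast hKN⟩,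
    Int.toNat_natCast, Int.toNat_natCast]

set_option maxHeartbeats 2000000 in
/-- **Lemma 3.5 (1).** Let `p` be an odd prime, `2 ≤ b ≤ p`, `t ≥ 2`, `d ≥ 0`,
`r = b + c(p−1) + p^t(p−1)d`, `1 ≤ c ≤ p−2`, `0 ≤ m ≤ p−1`, `(b,m) ≠ (p,0)`.
If `0 ≤ m ≤ l ≤ b−c` and `0 ≤ j ≤ c−1`, then `ν_p(C(r−l, b−m+j(p−1))) = 1` and
`C(b−m−c, l−m)·C(b−m, c)·C(r−l, b−m+j(p−1)) ≡ (−1)^{l−m}·p·C(b−m, j)·C(p−1+m−l, c−1−j)`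
modulo `p²`. -/
theorem stmt_10 (p : ℕ) (hp : p.Prime) (hodd : Odd p)
    (b c m j l r : ℤ) (t d : ℕ)
    (hb2 : 2 ≤ b) (hbp : b ≤ (p : ℤ)) (ht : 2 ≤ t)
    (hr : r = b + c * ((p : ℤ) - 1) + (p : ℤ) ^ t * ((p : ℤ) - 1) * (d : ℤ))
    (hc1 : 1 ≤ c) (hcp : c ≤ (p : ℤ) - 2)
    (hm0 : 0 ≤ m) (hmp : m ≤ (p : ℤ) - 1)
    (hbm : ¬ (b = (p : ℤ) ∧ m = 0))
    (hml : m ≤ l) (hlb : l ≤ b - c) (hj0 : 0 ≤ j) (hjc : j ≤ c - 1) :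
    ((p : ℤ) ∣ iC (r - l) (b - m + j * ((p : ℤ) - 1)) ∧
      ¬ ((p : ℤ) ^ 2 ∣ iC (r - l) (b - m + j * ((p : ℤ) - 1)))) ∧
    (iC (b - m - c) (l - m) * iC (b - m) c * iC (r - l) (b - m + j * ((p : ℤ) - 1)) ≡
      (-1 : ℤ) ^ (l - m).toNat * (p : ℤ) * iC (b - m) j * iC ((p : ℤ) - 1 + m - l) (c - 1 - j)
      [ZMOD ((p : ℤ) ^ 2)]) := by
  haveI : Fact p.Prime := ⟨hp⟩
  have hp0 : 0 < p := hp.pos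
  -- nat versions
  set s := (l - m).toNat with hsdef
  set J := j.toNat with hJdef
  set C := c.toNat with hCdef
  set e1 := (c - 1 - j).toNat with he1def
  set a0 := (b - l - c).toNat with ha0def
  set k0 := (b - m - j).toNat with hk0def
  set BM := (b - m).toNat with hBMdef
  set BMC := (b - m - c).toNat with hBMCdef
  set PML := ((p:ℤ) - 1 + m - l).toNat with hPMLdef
  have hsz : (s:ℤ) = l - m := Int.toNat_of_nonneg (by omega)
  have hJz : (J:ℤ) = j := Int.toNat_of_nonneg (by omega)
  have hCz : (C:ℤ) = c := Int.toNat_of_nonneg (by omega)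
  have he1z : (e1:ℤ) = c - 1 - j := Int.toNat_of_nonneg (by omega)
  have ha0z : (a0:ℤ) = b - l - c := Int.toNat_of_nonneg (by omega)
  have hk0z : (k0:ℤ) = b - m - j := Int.toNat_of_nonneg (by omega)
  have hBMz : (BM:ℤ) = b - m := Int.toNat_of_nonneg (by omega)
  have hBMCz : (BMC:ℤ) = b - m - c := Int.toNat_of_nonneg (by omega)
  have hPMLz : (PML:ℤ) = (p:ℤ) - 1 + m - l := Int.toNat_of_nonneg (by omega)
  -- nat facts
  have hk0p : k0 < p := by omega
  have ha0k0 : a0 < k0 := by omega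
  have hCp' : C < p := by omega
  have hCnat : C = J + e1 + 1 := by omega
  have hJp : J < p := by omega
  have hsBMC : s ≤ BMC := by omega
  have hBMCs : BMC - s = a0 := by omega
  have hCBM : C ≤ BM := by omega
  have hBMC2 : BM - C = BMC := by omega
  have hJBM : J ≤ BM := by omega
  have hBMJ : BM - J = k0 := by omega
  set e0 := p + a0 - k0 with he0def
  have he1PML : e1 ≤ PML := by omega
  have hPMLe1 : PML - e1 = e0 := by omega
  have hsp1 : s ≤ p - 1 := by omega
  have hPML : PML = p - 1 - s := by omega
  have hsp : s < p := by omega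
  have ha0p : a0 < p := by omega
  have hBMp : BM < p := by omega
  have hBMCp : BMC < p := by omega
  have he1p : e1 < p := by omega
  have he0p : e0 < p := by omega
  have hPMLp : PML < p := by omega
  set P := p ^ t * (p - 1) * d with hPdef
  have hPdvd : p^2 ∣ P := dvd_mul_of_dvd_left (dvd_mul_of_dvd_left (pow_dvd_pow p ht) _) _
  have hPz : ((P:ℕ):ℤ) = (p:ℤ)^t * ((p:ℤ) - 1) * (d:ℤ) := by
    have h1 : ((p - 1 : ℕ) : ℤ) = (p:ℤ) - 1 := by omega
    rw [hPdef]
    push_cast [h1]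
    ring
  -- key and stepA
  obtain ⟨Q, hQeq, hQnd, hQc⟩ := key p a0 k0 J e1 ha0k0 hk0p (by omega)
  rw [← hCnat] at hQeq hQc
  have hstep := stepA p a0 k0 J C P hPdvd ha0k0 hk0p hJp
  -- the binomial as nat
  have hkle : k0 + J * p ≤ a0 + C * p + P := by
    have hcp2 : C * p = J * p + e1 * p + p := by rw [hCnat]; ring
    omega
  have hNeq : r - l = ((a0 + C * p + P : ℕ) : ℤ) := by
    push_cast [hPz]
    rw [hr, ha0z, hCz]
    ring
  have hKeq : b - m + j * ((p:ℤ) - 1) = ((k0 + J * p : ℕ) : ℤ) := by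
    push_cast
    rw [hk0z, hJz]
    ring
  have hiCmain : iC (r - l) (b - m + j * ((p:ℤ) - 1)) =
      ((a0 + C * p + P).choose (k0 + J * p) : ℤ) := iC_eq_nat _ _ _ _ hNeq hKeq hkle
  -- congruence choose ≡ p * Q mod p^2, integer version
  have hmodnat : (a0 + C * p + P).choose (k0 + J * p) ≡ p * Q [MOD p^2] := by
    apply (ZMod.natCast_eq_natCast_iff _ _ _).mp
    rw [hstep, hQeq]
  have hmodint : ((a0 + C * p + P).choose (k0 + J * p) : ℤ) ≡ (p:ℤ) * (Q:ℤ) [ZMOD (p:ℤ)^2] := by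
    have h1 := Int.natCast_modEq_iff.mpr hmodnat
    push_cast at h1
    exact h1
  constructor
  · constructor
    · rw [hiCmain]
      have hd := Int.ModEq.dvd hmodint
      have hpd : (p:ℤ) ∣ ((p:ℤ)*Q - ((a0 + C * p + P).choose (k0 + J * p) : ℤ)) :=
        dvd_trans (dvd_pow_self (p:ℤ) (by norm_num)) hd
      have : ((a0 + C * p + P).choose (k0 + J * p) : ℤ)
          = (p:ℤ)*Q - ((p:ℤ)*Q - ((a0 + C * p + P).choose (k0 + J * p) : ℤ)) := by ring
      rw [this]
      exact dvd_sub (Dvd.intro _ rfl) hpd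
    · rw [hiCmain]
      intro hdd
      have hd := Int.ModEq.dvd hmodint
      have h2 : (p:ℤ)^2 ∣ (p:ℤ)*Q := by
        have : (p:ℤ)*Q = ((p:ℤ)*Q - ((a0 + C * p + P).choose (k0 + J * p) : ℤ))
            + ((a0 + C * p + P).choose (k0 + J * p) : ℤ) := by ring
        rw [this]
        exact dvd_add hd hdd
      have h3 : (p:ℤ) ∣ (Q:ℤ) := by
        rw [pow_two] at h2
        exact (mul_dvd_mul_iff_left (show (p:ℤ) ≠ 0 by exact_mod_cast hp.ne_zero)).mp h2
      exact hQnd (by exact_mod_cast h3)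
  · -- the congruence
    rw [hiCmain,
      iC_eq_nat (b - m - c) (l - m) BMC s (by omega) (by omega) hsBMC,
      iC_eq_nat (b - m) c BM C (by omega) (by omega) hCBM,
      iC_eq_nat (b - m) j BM J (by omega) (by omega) hJBM,
      iC_eq_nat ((p:ℤ) - 1 + m - l) (c - 1 - j) PML e1 (by omega) (by omega) he1PML]
    -- mod p statement
    have hmodp : ((BMC.choose s : ℤ)) * (BM.choose C : ℤ) * (Q:ℤ) ≡
        (-1:ℤ)^s * (BM.choose J : ℤ) * (PML.choose e1 : ℤ) [ZMOD (p:ℤ)] := by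
      have hcast : ((p:ℤ)) = ((p:ℕ):ℤ) := rfl
      rw [show ((p:ℤ)) = ((p:ℕ):ℤ) from rfl, ← ZMod.intCast_eq_intCast_iff]
      push_cast
      -- ZMod p algebra
      have hU1 : ((BMC.choose s : ℕ) : ZMod p) * ((s ! : ℕ) : ZMod p) * ((a0 ! : ℕ) : ZMod p)
          = ((BMC ! : ℕ) : ZMod p) := by
        have h := Nat.choose_mul_factorial_mul_factorial hsBMC
        rw [hBMCs] at h
        exact_mod_cast congrArg (Nat.cast : ℕ → ZMod p) h
      have hU2 : ((BM.choose C : ℕ) : ZMod p) * ((C ! : ℕ) : ZMod p) * ((BMC ! : ℕ) : ZMod p)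
          = ((BM ! : ℕ) : ZMod p) := by
        have h := Nat.choose_mul_factorial_mul_factorial hCBM
        rw [hBMC2] at h
        exact_mod_cast congrArg (Nat.cast : ℕ → ZMod p) h
      have hV1 : ((BM.choose J : ℕ) : ZMod p) * ((J ! : ℕ) : ZMod p) * ((k0 ! : ℕ) : ZMod p)
          = ((BM ! : ℕ) : ZMod p) := by
        have h := Nat.choose_mul_factorial_mul_factorial hJBM
        rw [hBMJ] at h
        exact_mod_cast congrArg (Nat.cast : ℕ → ZMod p) h
      have hV2 : ((PML.choose e1 : ℕ) : ZMod p) * ((e1 ! : ℕ) : ZMod p) * ((e0 ! : ℕ) : ZMod p)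
          = ((PML ! : ℕ) : ZMod p) := by
        have h := Nat.choose_mul_factorial_mul_factorial he1PML
        rw [hPMLe1] at h
        exact_mod_cast congrArg (Nat.cast : ℕ → ZMod p) h
      have hwil : ((s ! : ℕ) : ZMod p) * ((PML ! : ℕ) : ZMod p) = (-1)^(s+1) := by
        have h := wilson_aux p s hsp1
        rw [← hPML] at h
        exact h
      have hsq : ((-1 : ZMod p)^s) * ((-1 : ZMod p)^s) = 1 := by
        rw [← pow_add]
        exact Even.neg_one_pow ⟨s, rfl⟩
      have hX : (((s ! : ℕ) : ZMod p) * ((a0 ! : ℕ) : ZMod p) * ((C ! : ℕ) : ZMod p) *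
          ((BMC ! : ℕ) : ZMod p) * ((J ! : ℕ) : ZMod p) * ((k0 ! : ℕ) : ZMod p) *
          ((e1 ! : ℕ) : ZMod p) * ((e0 ! : ℕ) : ZMod p) * ((PML ! : ℕ) : ZMod p)) ≠ 0 := by
        refine mul_ne_zero (mul_ne_zero (mul_ne_zero (mul_ne_zero (mul_ne_zero (mul_ne_zero
          (mul_ne_zero (mul_ne_zero ?_ ?_) ?_) ?_) ?_) ?_) ?_) ?_) ?_ <;>
          first
          | exact fact_cast_ne_zero p s hsp
          | exact fact_cast_ne_zero p a0 ha0p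
          | exact fact_cast_ne_zero p C hCp'
          | exact fact_cast_ne_zero p BMC hBMCp
          | exact fact_cast_ne_zero p J hJp
          | exact fact_cast_ne_zero p k0 hk0p
          | exact fact_cast_ne_zero p e1 he1p
          | exact fact_cast_ne_zero p e0 he0p
          | exact fact_cast_ne_zero p PML hPMLp
      apply mul_right_cancel₀ hX
      -- abbreviations
      set u1 := ((BMC.choose s : ℕ) : ZMod p)
      set u2 := ((BM.choose C : ℕ) : ZMod p)
      set v1 := ((BM.choose J : ℕ) : ZMod p)
      set v2 := ((PML.choose e1 : ℕ) : ZMod p)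
      set q := ((Q : ℕ) : ZMod p)
      set fs := ((s ! : ℕ) : ZMod p)
      set fa := ((a0 ! : ℕ) : ZMod p)
      set fC := ((C ! : ℕ) : ZMod p)
      set fB := ((BMC ! : ℕ) : ZMod p)
      set fM := ((BM ! : ℕ) : ZMod p)
      set fJ := ((J ! : ℕ) : ZMod p)
      set fk := ((k0 ! : ℕ) : ZMod p)
      set f1 := ((e1 ! : ℕ) : ZMod p)
      set f0 := ((e0 ! : ℕ) : ZMod p)
      set fP := ((PML ! : ℕ) : ZMod p)
      set σ := ((-1 : ZMod p)^s)
      linear_combination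
        (u2*fC*fB*q*fJ*fk*f1*f0*fP) * hU1
        + (fB*q*fJ*fk*f1*f0*fP) * hU2
        + (fB*fM*fP) * hQc
        - (σ*v2*f1*f0*fs*fa*fC*fB*fP) * hV1
        - (σ*fs*fa*fC*fB*fP*fM) * hV2
        - (σ*fa*fC*fB*fM*fP) * hwil
        + (fa*fC*fB*fM*fP) * hsq
    calc ((BMC.choose s : ℤ)) * (BM.choose C : ℤ) * ((a0 + C * p + P).choose (k0 + J * p) : ℤ)
        ≡ ((BMC.choose s : ℤ)) * (BM.choose C : ℤ) * ((p:ℤ) * (Q:ℤ)) [ZMOD (p:ℤ)^2] :=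
          hmodint.mul_left _
      _ = (p:ℤ) * (((BMC.choose s : ℤ)) * (BM.choose C : ℤ) * (Q:ℤ)) := by ring
      _ ≡ (p:ℤ) * ((-1:ℤ)^s * (BM.choose J : ℤ) * (PML.choose e1 : ℤ)) [ZMOD (p:ℤ)^2] := by
          have h2 := hmodp.mul_left' (c := (p:ℤ))
          rwa [show (p:ℤ)*(p:ℤ) = (p:ℤ)^2 by ring] at h2
      _ = (-1:ℤ)^s * (p:ℤ) * (BM.choose J : ℤ) * (PML.choose e1 : ℤ) := by ring
end

section
/- Assume additionally 1 ≤ c ≤ p−2, 0 ≤ m ≤ p−1 and (b, m) ≠ (p, 0). If b ≤ m ≤ l ≤ p+b−c and 1 ≤ j ≤ c−1, then ν_p( C(r−l, b−m+j(p−1)) ) = 1 and, after clearing the unit denominators, C(p+b−m−c, l−m) · C(p+b−m−1, c−1) · C(r−l, b−m+j(p−1)) ≡ (−1)^{l−m} · p · C(p+b−m−1, j−1) · C(p−1+m−l, c−1−j) modulo p^2. (Here C(p+b−m−c, l−m) and C(p+b−m−1, c−1) are units modulo p.) -/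
open Nat Finset

lemma mulmod (p a x y : ℕ) (ha : p ∣ a) (h : x ≡ y [MOD p]) :
    ((a * x : ℕ) : ZMod (p^2)) = ((a * y : ℕ) : ZMod (p^2)) := by
  rw [ZMod.natCast_eq_natCast_iff]
  obtain ⟨e, rfl⟩ := ha
  have h2 := (h.mul_left e).mul_left' (c := p)
  have e1 : p * e * x = p * (e * x) := by ring
  have e2 : p * e * y = p * (e * y) := by ring
  rw [e1, e2, pow_two]
  exact h2

lemma lucas2 (p : ℕ) [Fact p.Prime] (A B u v : ℕ) (hu : u < p) (hv : v < p) :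
    (((A * p + u).choose (B * p + v) : ℕ) : ZMod p)
      = ((A.choose B * u.choose v : ℕ) : ZMod p) := by
  have hp0 : 0 < p := (Fact.out (p := p.Prime)).pos
  have h := Choose.choose_modEq_choose_mod_mul_choose_div (p := p) (n := A*p+u) (k := B*p+v)
  have hm : ∀ C w, w < p → (C*p+w) % p = w := fun C w hw => by
    rw [show C*p+w = p*C+w by ring, Nat.mul_add_mod]; exact Nat.mod_eq_of_lt hw
  have hd : ∀ C w, w < p → (C*p+w) / p = C := fun C w hw => by
    rw [show C*p+w = p*C+w by ring, Nat.mul_add_div hp0, Nat.div_eq_of_lt hw, Nat.add_zero]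
  rw [hm A u hu, hd A u hu, hm B v hv, hd B v hv] at h
  have h2 := (ZMod.intCast_eq_intCast_iff _ _ p).mpr h
  push_cast at h2 ⊢
  rw [h2]; ring

lemma lemA (p : ℕ) [Fact p.Prime] (n₀ k₀ : ℕ) (h1 : n₀ < k₀) (h2 : k₀ < p) (N : ℕ) :
    ∀ K : ℕ, (((N*p+n₀).choose (K*p+k₀) : ℕ) : ZMod (p^2))
      = ((N * ((N-1).choose K) * ((p+n₀).choose k₀) : ℕ) : ZMod (p^2)) := by
  have hp := Fact.out (p := p.Prime)
  have hp0 : 0 < p := hp.pos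
  induction N with
  | zero =>
    intro K
    have : n₀ < K*p+k₀ := lt_of_lt_of_le h1 (Nat.le_add_left _ _)
    simp [Nat.choose_eq_zero_of_lt this]
  | succ N ih =>
    intro K
    have hVan0 : ∑ i ∈ Finset.Icc 1 k₀, p.choose i * n₀.choose (k₀-i) = (p+n₀).choose k₀ := by
      rw [Nat.add_choose_eq, Finset.Nat.sum_antidiagonal_eq_sum_range_succ_mk]
      rw [Finset.range_eq_Ico, Finset.sum_eq_sum_Ico_succ_bot (Nat.succ_pos k₀)]
      simp only [Nat.choose_zero_right, one_mul, Nat.sub_zero,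
        Nat.choose_eq_zero_of_lt h1, Nat.zero_add]
      rw [← Finset.Ico_add_one_right_eq_Icc]; rfl
    have key : ∀ i ∈ Finset.range (K*p+k₀+1),
        ((p.choose i * (N*p+n₀).choose (K*p+k₀ - i) : ℕ) : ZMod (p^2)) =
        (if i = 0 then ((N * ((N-1).choose K) * ((p+n₀).choose k₀) : ℕ) : ZMod (p^2)) else 0)
        + (if i = p then ((N * ((N-1).choose (K-1)) * ((p+n₀).choose k₀) : ℕ) : ZMod (p^2)) else 0)
        + (if i ∈ Finset.Icc 1 k₀
            then ((p.choose i * (N.choose K * n₀.choose (k₀ - i)) : ℕ) : ZMod (p^2)) else 0) := by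
      intro i hi
      rw [Finset.mem_range] at hi
      rcases eq_or_ne i 0 with rfl | hi0
      · rw [if_pos rfl, if_neg (by omega), if_neg (by simp)]
        rw [Nat.choose_zero_right, one_mul, Nat.sub_zero, ih K, add_zero, add_zero]
      · rcases eq_or_ne i p with hip | hip
        · rw [if_neg hi0, if_pos hip, if_neg (by simp only [Finset.mem_Icc]; omega)]
          rw [hip] at hi ⊢
          have hKpos : 1 ≤ K := by
            rcases Nat.eq_zero_or_pos K with rfl | h
            · simp only [Nat.zero_mul, Nat.zero_add] at hi; omega
            · exact h
          obtain ⟨K', rfl⟩ : ∃ K', K = K' + 1 := ⟨K - 1, by omega⟩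
          have hTp : (K'+1)*p+k₀ - p = K'*p + k₀ := by
            rw [show (K'+1)*p+k₀ = p + (K'*p+k₀) by ring, Nat.add_sub_cancel_left]
          rw [hTp, Nat.choose_self, one_mul, ih K', Nat.add_sub_cancel, zero_add, add_zero]
        · rcases le_or_gt i k₀ with hik | hik
          · have hmem : i ∈ Finset.Icc 1 k₀ := by simp only [Finset.mem_Icc]; omega
            rw [if_neg hi0, if_neg hip, if_pos hmem, zero_add, zero_add]
            have hTi : K*p+k₀ - i = K*p + (k₀ - i) := by omega
            rw [hTi]
            apply mulmod
            · exact hp.dvd_choose_self hi0 (by omega)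
            · rw [← ZMod.natCast_eq_natCast_iff]
              exact lucas2 p N K n₀ (k₀-i) (by omega) (by omega)
          · rw [if_neg hi0, if_neg hip, if_neg (by simp only [Finset.mem_Icc]; omega),
              add_zero, add_zero]
            rcases lt_or_gt_of_ne hip with hlt | hgt
            · have hKpos : 1 ≤ K := by
                rcases Nat.eq_zero_or_pos K with rfl | h; · omega
                · exact h
              obtain ⟨K', rfl⟩ : ∃ K', K = K' + 1 := ⟨K - 1, by omega⟩
              have hTi : (K'+1)*p+k₀ - i = K'*p + (p + k₀ - i) := by
                have h3 : (K'+1)*p + k₀ = K'*p + (p + k₀) := by ring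
                omega
              have hg1 : n₀ < p + k₀ - i := by omega
              have hg2 : p + k₀ - i < p := by omega
              rw [ZMod.natCast_eq_zero_iff, pow_two]
              apply mul_dvd_mul
              · exact hp.dvd_choose_self hi0 hlt
              · have hc : (((N*p+n₀).choose ((K'+1)*p+k₀ - i) : ℕ) : ZMod p)
                    = ((0 : ℕ) : ZMod p) := by
                  rw [hTi, lucas2 p N K' n₀ (p+k₀-i) (by omega) hg2]
                  rw [Nat.choose_eq_zero_of_lt hg1, Nat.mul_zero]
                have := (ZMod.natCast_eq_natCast_iff _ _ _).mp hc
                simpa [Nat.modEq_zero_iff_dvd] using this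
            · rw [Nat.choose_eq_zero_of_lt hgt, Nat.zero_mul, Nat.cast_zero]
    have hsplit : (((N+1)*p + n₀).choose (K*p+k₀) : ℕ) = ∑ i ∈ Finset.range (K*p+k₀+1),
        (p.choose i * (N*p+n₀).choose (K*p+k₀ - i)) := by
      rw [show (N+1)*p + n₀ = p + (N*p+n₀) by ring, Nat.add_choose_eq,
        Finset.Nat.sum_antidiagonal_eq_sum_range_succ_mk]
    rw [hsplit, Nat.cast_sum, Finset.sum_congr rfl key]
    rw [Finset.sum_add_distrib, Finset.sum_add_distrib]
    rw [Finset.sum_ite_eq' (Finset.range (K*p+k₀+1)) 0,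
      Finset.sum_ite_eq' (Finset.range (K*p+k₀+1)) p, Finset.sum_ite_mem]
    have hsub : Finset.range (K*p+k₀+1) ∩ Finset.Icc 1 k₀ = Finset.Icc 1 k₀ := by
      apply Finset.inter_eq_right.mpr
      intro x hx
      simp only [Finset.mem_Icc] at hx
      simp only [Finset.mem_range]
      omega
    rw [hsub]
    have hmidsum : ∑ i ∈ Finset.Icc 1 k₀,
        ((p.choose i * (N.choose K * n₀.choose (k₀ - i)) : ℕ) : ZMod (p^2))
        = ((N.choose K * ((p+n₀).choose k₀) : ℕ) : ZMod (p^2)) := by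
      rw [← Nat.cast_sum]
      congr 1
      rw [← hVan0, Finset.mul_sum]
      apply Finset.sum_congr rfl
      intros; ring
    rw [hmidsum, if_pos (by simp)]
    rcases Nat.eq_zero_or_pos K with rfl | hK
    · rw [if_neg (by simp only [Finset.mem_range]; omega)]
      simp only [Nat.choose_zero_right]
      push_cast
      ring
    · obtain ⟨K', rfl⟩ : ∃ K', K = K' + 1 := ⟨K - 1, by omega⟩
      rw [if_pos (by simp only [Finset.mem_range]; nlinarith)]
      have hnat : N * ((N-1).choose (K'+1)) * ((p+n₀).choose k₀)
          + N * ((N-1).choose K') * ((p+n₀).choose k₀)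
          + (N.choose (K'+1)) * ((p+n₀).choose k₀)
          = (N+1) * (N.choose (K'+1)) * ((p+n₀).choose k₀) := by
        rcases Nat.eq_zero_or_pos N with rfl | hN
        · simp
        · obtain ⟨n, rfl⟩ : ∃ n, N = n + 1 := ⟨N - 1, by omega⟩
          simp only [Nat.add_sub_cancel]
          rw [Nat.choose_succ_succ n K']
          ring
      simp only [Nat.add_sub_cancel] at *
      rw [← hnat]
      push_cast
      ring

lemma pairW (p : ℕ) [Fact p.Prime] : ∀ z, z ≤ p - 1 →
    (((p - 1 - z).factorial * z.factorial : ℕ) : ZMod p) = (-1)^(z+1) := by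
  have hp := Fact.out (p := p.Prime)
  have hp2 : 2 ≤ p := hp.two_le
  intro z
  induction z with
  | zero =>
    intro _
    simp only [Nat.sub_zero, Nat.factorial_zero, Nat.mul_one, pow_one]
    exact_mod_cast ZMod.wilsons_lemma p
  | succ z ih =>
    intro hz
    have hz' : z ≤ p - 1 := by omega
    have ihz := ih hz'
    obtain ⟨w, hw⟩ : ∃ w, p - 1 - z = w + 1 := ⟨p - 2 - z, by omega⟩
    have hw2 : p - 1 - (z+1) = w := by omega
    have hsum : (w + 1) + (z + 1) = p := by omega
    have hkey : ((w + 1 : ℕ) : ZMod p) = -((z + 1 : ℕ) : ZMod p) := by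
      have : ((w + 1 : ℕ) : ZMod p) + ((z + 1 : ℕ) : ZMod p) = ((p : ℕ) : ZMod p) := by
        rw [← Nat.cast_add, hsum]
      rw [ZMod.natCast_self] at this
      exact eq_neg_of_add_eq_zero_left this
    rw [hw] at ihz
    rw [hw2]
    have hzu : ((z + 1 : ℕ) : ZMod p) ≠ 0 := by
      rw [Ne, ZMod.natCast_eq_zero_iff]
      intro hdvd
      have := Nat.le_of_dvd (by omega) hdvd
      omega
    push_cast [Nat.factorial_succ] at ihz ⊢
    push_cast at hkey
    linear_combination (-1 : ZMod p) * ihz + (((w.factorial : ZMod p)) * (z.factorial : ZMod p)) * hkey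

-- p*a ≡ p*b mod p^2 from a ≡ b mod p (ints)
lemma intMulLeft {p a b : ℤ} (h : a ≡ b [ZMOD p]) : p * a ≡ p * b [ZMOD p^2] := by
  obtain ⟨e, he⟩ := Int.ModEq.dvd h
  rw [Int.modEq_iff_dvd]
  exact ⟨e, by linear_combination p * he⟩

lemma lemC (p : ℕ) [Fact p.Prime] : ∀ G : ℕ,
    (((p + G).factorial : ℤ)) ≡ -(p:ℤ) * (G.factorial : ℤ) [ZMOD ((p:ℤ))^2] := by
  have hp := Fact.out (p := p.Prime)
  have hp2 : 2 ≤ p := hp.two_le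
  intro G
  induction G with
  | zero =>
    have hW : ((p-1).factorial : ℤ) ≡ (-1 : ℤ) [ZMOD (p:ℤ)] := by
      have := ZMod.wilsons_lemma p
      have h2 : (((p-1).factorial : ℤ) : ZMod p) = ((-1 : ℤ) : ZMod p) := by
        push_cast
        exact_mod_cast this
      exact (ZMod.intCast_eq_intCast_iff _ _ _).mp h2
    have hfac : (p + 0).factorial = p * (p-1).factorial := by
      rw [Nat.add_zero]
      conv_lhs => rw [show p = (p-1) + 1 by omega]
      rw [Nat.factorial_succ, show p - 1 + 1 = p by omega]
    rw [hfac]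
    have := intMulLeft (p := (p:ℤ)) hW
    push_cast
    simpa using this
  | succ G ih =>
    have hfac : (p + (G+1)).factorial = (p + G + 1) * (p + G).factorial := by
      rw [show p + (G+1) = (p+G) + 1 by ring, Nat.factorial_succ]
    rw [hfac]
    push_cast
    calc ((p:ℤ) + G + 1) * ((p+G).factorial : ℤ)
        ≡ ((p:ℤ) + G + 1) * (-(p:ℤ) * G.factorial) [ZMOD ((p:ℤ))^2] := Int.ModEq.mul_left _ ih
      _ ≡ -(p:ℤ) * ((G+1).factorial : ℤ) [ZMOD ((p:ℤ))^2] := by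
          rw [Int.modEq_iff_dvd]
          push_cast [Nat.factorial_succ]
          exact ⟨(G.factorial : ℤ), by ring⟩

lemma lemD (p A S G J I : ℕ) [Fact p.Prime] (hp5 : p = A+S+G+J+I+2) :
    (-(G.factorial : ZMod p)) * ((S+G).choose S : ℕ) * ((S+G+J+I+1).choose (J+I+1) : ℕ)
      * ((J+I+1 : ℕ) : ZMod p) * ((J+I).choose J : ℕ)
    = (-1)^S * ((S+G+J+I+1).choose J : ℕ) * ((A+G+J+I+1).choose I : ℕ)
      * ((S+G+I+1).factorial : ℕ) * ((A+G+J+1).factorial : ℕ) := by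
  have hp := Fact.out (p := p.Prime)
  have nat1 : (S+G).choose S * S.factorial * G.factorial = (S+G).factorial := by
    have := Nat.choose_mul_factorial_mul_factorial (show S ≤ S+G by omega)
    rwa [show S+G-S = G by omega] at this
  have nat2 : (S+G+J+I+1).choose (J+I+1) * (J+I+1).factorial * (S+G).factorial
      = (S+G+J+I+1).factorial := by
    have := Nat.choose_mul_factorial_mul_factorial (show J+I+1 ≤ S+G+J+I+1 by omega)
    rwa [show S+G+J+I+1-(J+I+1) = S+G by omega] at this
  have nat3 : (J+I).choose J * J.factorial * I.factorial = (J+I).factorial := by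
    have := Nat.choose_mul_factorial_mul_factorial (show J ≤ J+I by omega)
    rwa [show J+I-J = I by omega] at this
  have nat4 : (S+G+J+I+1).choose J * J.factorial * (S+G+I+1).factorial
      = (S+G+J+I+1).factorial := by
    have := Nat.choose_mul_factorial_mul_factorial (show J ≤ S+G+J+I+1 by omega)
    rwa [show S+G+J+I+1-J = S+G+I+1 by omega] at this
  have nat5 : (A+G+J+I+1).choose I * I.factorial * (A+G+J+1).factorial
      = (A+G+J+I+1).factorial := by
    have := Nat.choose_mul_factorial_mul_factorial (show I ≤ A+G+J+I+1 by omega)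
    rwa [show A+G+J+I+1-I = A+G+J+1 by omega] at this
  have e6 : (((A+G+J+I+1).factorial : ℕ) : ZMod p) * ((S.factorial : ℕ) : ZMod p)
      = (-1)^(S+1) := by
    have := pairW p S (by omega)
    rw [show p - 1 - S = A+G+J+I+1 by omega] at this
    push_cast at this
    exact this
  have hM : ((S.factorial * G.factorial * (S+G).factorial * J.factorial * I.factorial
      * (J+I+1).factorial : ℕ) : ZMod p) ≠ 0 := by
    rw [Ne, ZMod.natCast_eq_zero_iff]
    intro h
    have hd : ∀ n : ℕ, n < p → ¬ p ∣ n.factorial := by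
      intro n hn hdvd
      have := (Nat.Prime.dvd_factorial hp).mp hdvd
      omega
    rcases (Nat.Prime.dvd_mul hp).mp h with h | h
    rcases (Nat.Prime.dvd_mul hp).mp h with h | h
    rcases (Nat.Prime.dvd_mul hp).mp h with h | h
    rcases (Nat.Prime.dvd_mul hp).mp h with h | h
    rcases (Nat.Prime.dvd_mul hp).mp h with h | h
    all_goals first
      | exact hd _ (by omega) h
  apply mul_right_cancel₀ hM
  have hsq : ((-1 : ZMod p)^S) * ((-1)^S) = 1 := by
    rw [← pow_add, ← two_mul, pow_mul, neg_one_sq, one_pow]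
  calc (-(G.factorial : ZMod p)) * ((S+G).choose S : ℕ) * ((S+G+J+I+1).choose (J+I+1) : ℕ)
      * ((J+I+1 : ℕ) : ZMod p) * ((J+I).choose J : ℕ)
      * ((S.factorial * G.factorial * (S+G).factorial * J.factorial * I.factorial
        * (J+I+1).factorial : ℕ) : ZMod p)
      = (-1 : ZMod p) * ((G.factorial * ((S+G).choose S * S.factorial * G.factorial)
          * ((S+G+J+I+1).choose (J+I+1) * (J+I+1).factorial * (S+G).factorial)
          * ((J+I+1) * ((J+I).choose J * J.factorial * I.factorial)) : ℕ) : ZMod p) := by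
        push_cast; ring
    _ = (-1 : ZMod p) * ((G.factorial * (S+G).factorial
          * (S+G+J+I+1).factorial * (J+I+1).factorial : ℕ) : ZMod p) := by
        rw [nat1, nat2, nat3, ← Nat.factorial_succ]
    _ = (-1)^S * (((S+G+J+I+1).choose J * J.factorial * (S+G+I+1).factorial : ℕ) : ZMod p)
          * ((((A+G+J+I+1).choose I * I.factorial * (A+G+J+1).factorial : ℕ) : ZMod p)
            * ((S.factorial : ℕ) : ZMod p))
          * ((G.factorial * (S+G).factorial * (J+I+1).factorial : ℕ) : ZMod p) := by
        rw [nat4, nat5, e6]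
        push_cast
        linear_combination (((S+G+J+I+1).factorial : ZMod p) * (G.factorial : ZMod p)
          * ((S+G).factorial : ZMod p) * ((J+I+1).factorial : ZMod p)) * hsq
    _ = (-1)^S * ((S+G+J+I+1).choose J : ℕ) * ((A+G+J+I+1).choose I : ℕ)
      * ((S+G+I+1).factorial : ℕ) * ((A+G+J+1).factorial : ℕ)
      * ((S.factorial * G.factorial * (S+G).factorial * J.factorial * I.factorial
        * (J+I+1).factorial : ℕ) : ZMod p) := by
        push_cast; ring

/-- **Lemma 3.5 (2).** Let `p` be an odd prime, `2 ≤ b ≤ p`, `t ≥ 2`, `d ≥ 0`,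
`r = b + c(p−1) + p^t(p−1)d`, `1 ≤ c ≤ p−2`, `0 ≤ m ≤ p−1`, `(b,m) ≠ (p,0)`.
If `b ≤ m ≤ l ≤ p+b−c` and `1 ≤ j ≤ c−1`, then `ν_p(C(r−l, b−m+j(p−1))) = 1` and
`C(p+b−m−c, l−m)·C(p+b−m−1, c−1)·C(r−l, b−m+j(p−1)) ≡
  (−1)^{l−m}·p·C(p+b−m−1, j−1)·C(p−1+m−l, c−1−j)` modulo `p²`. -/
theorem stmt_11 (p : ℕ) (hp : p.Prime) (hodd : Odd p)
    (b c m j l r : ℤ) (t d : ℕ)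
    (hb2 : 2 ≤ b) (hbp : b ≤ (p : ℤ)) (ht : 2 ≤ t)
    (hr : r = b + c * ((p : ℤ) - 1) + (p : ℤ) ^ t * ((p : ℤ) - 1) * (d : ℤ))
    (hc1 : 1 ≤ c) (hcp : c ≤ (p : ℤ) - 2)
    (hm0 : 0 ≤ m) (hmp : m ≤ (p : ℤ) - 1)
    (hbm : ¬ (b = (p : ℤ) ∧ m = 0))
    (hbm' : b ≤ m) (hml : m ≤ l) (hlb : l ≤ (p : ℤ) + b - c)
    (hj1 : 1 ≤ j) (hjc : j ≤ c - 1) :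
    ((p : ℤ) ∣ iC (r - l) (b - m + j * ((p : ℤ) - 1)) ∧
      ¬ ((p : ℤ) ^ 2 ∣ iC (r - l) (b - m + j * ((p : ℤ) - 1)))) ∧
    (iC ((p : ℤ) + b - m - c) (l - m) * iC ((p : ℤ) + b - m - 1) (c - 1) *
        iC (r - l) (b - m + j * ((p : ℤ) - 1)) ≡
      (-1 : ℤ) ^ (l - m).toNat * (p : ℤ) * iC ((p : ℤ) + b - m - 1) (j - 1) *
        iC ((p : ℤ) - 1 + m - l) (c - 1 - j)
      [ZMOD ((p : ℤ) ^ 2)]) := by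
  haveI : Fact p.Prime := ⟨hp⟩
  -- nat parameters
  obtain ⟨A, hA⟩ : ∃ A : ℕ, (A:ℤ) = m - b := ⟨(m-b).toNat, Int.toNat_of_nonneg (by linarith)⟩
  obtain ⟨S, hS⟩ : ∃ S : ℕ, (S:ℤ) = l - m := ⟨(l-m).toNat, Int.toNat_of_nonneg (by linarith)⟩
  obtain ⟨J, hJ⟩ : ∃ J : ℕ, (J:ℤ) = j - 1 := ⟨(j-1).toNat, Int.toNat_of_nonneg (by linarith)⟩
  obtain ⟨I, hI⟩ : ∃ I : ℕ, (I:ℤ) = c - 1 - j :=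
    ⟨(c-1-j).toNat, Int.toNat_of_nonneg (by linarith)⟩
  obtain ⟨G, hG⟩ : ∃ G : ℕ, (G:ℤ) = (p:ℤ) - c - (m - b) - (l - m) :=
    ⟨((p:ℤ) - c - (m-b) - (l-m)).toNat, Int.toNat_of_nonneg (by linarith)⟩
  have hp_eq : p = A + S + G + J + I + 2 := by
    have h0 : (p:ℤ) = (A:ℤ) + S + G + J + I + 2 := by linarith
    exact_mod_cast h0
  set Q : ℕ := p^(t-2)*(p-1)*d with hQ
  set N : ℕ := (J+I+1) + p*Q with hN
  set k₀ : ℕ := S+G+I+1 with hk₀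
  set m₀ : ℕ := A+G+J+1 with hm₀
  set V : ℕ := (p+G).choose k₀ with hV
  have hpt : ((p:ℤ))^t = (p:ℤ)^(t-2)*p*p := by
    rw [← pow_succ, ← pow_succ]; congr 1; omega
  -- big index identities
  have h_n : r - l = ((N*p+G : ℕ) : ℤ) := by
    rw [hr]
    push_cast [hN, hQ, Nat.cast_sub hp.one_lt.le]
    linear_combination ((p:ℤ)-1)*(d:ℤ)*hpt - hG - (p:ℤ)*hJ - (p:ℤ)*hI
  have h_k : b - m + j*((p:ℤ)-1) = ((J*p + k₀ : ℕ) : ℤ) := by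
    push_cast [hk₀]
    linear_combination -(p:ℤ)*hJ - hS - hG - hI
  -- iC rewrites
  have toNatCast : ∀ (x : ℤ) (n : ℕ), x = (n:ℤ) → x.toNat = n := by
    rintro x n rfl; exact Int.toNat_natCast n
  have h1a : (p:ℤ) + b - m - c = ((S+G : ℕ) : ℤ) := by push_cast; linarith
  have h1b : l - m = ((S:ℕ) : ℤ) := by push_cast; linarith
  have h2a : (p:ℤ) + b - m - 1 = ((S+G+J+I+1 : ℕ) : ℤ) := by push_cast; linarith
  have h2b : c - 1 = ((J+I+1 : ℕ) : ℤ) := by push_cast; linarith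
  have h3b : j - 1 = ((J:ℕ) : ℤ) := by push_cast; linarith
  have h4a : (p:ℤ) - 1 + m - l = ((A+G+J+I+1 : ℕ) : ℤ) := by push_cast; linarith
  have h4b : c - 1 - j = ((I:ℕ) : ℤ) := by push_cast; linarith
  have hiC1 : iC ((p:ℤ) + b - m - c) (l - m) = (((S+G).choose S : ℕ) : ℤ) := by
    rw [iC, if_pos ⟨by linarith, by linarith⟩, toNatCast _ _ h1a, toNatCast _ _ h1b]
  have hiC2 : iC ((p:ℤ) + b - m - 1) (c - 1) = (((S+G+J+I+1).choose (J+I+1) : ℕ) : ℤ) := by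
    rw [iC, if_pos ⟨by linarith, by linarith⟩, toNatCast _ _ h2a, toNatCast _ _ h2b]
  have hiC4 : iC ((p:ℤ) + b - m - 1) (j - 1) = (((S+G+J+I+1).choose J : ℕ) : ℤ) := by
    rw [iC, if_pos ⟨by linarith, by linarith⟩, toNatCast _ _ h2a, toNatCast _ _ h3b]
  have hiC5 : iC ((p:ℤ) - 1 + m - l) (c - 1 - j) = (((A+G+J+I+1).choose I : ℕ) : ℤ) := by
    rw [iC, if_pos ⟨by linarith, by linarith⟩, toNatCast _ _ h4a, toNatCast _ _ h4b]
  have hkle : J*p + k₀ ≤ N*p + G := by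
    have e1 : (J+1)*p ≤ N*p := Nat.mul_le_mul_right p (by omega)
    have e2 : (J+1)*p = J*p + p := by ring
    omega
  have hiC3 : iC (r - l) (b - m + j*((p:ℤ)-1)) = (((N*p+G).choose (J*p+k₀) : ℕ) : ℤ) := by
    rw [iC, if_pos ⟨by rw [h_k]; positivity, by rw [h_k, h_n]; exact_mod_cast hkle⟩,
      toNatCast _ _ h_n, toNatCast _ _ h_k]
  -- basic bounds
  have hk₀p : k₀ < p := by omega
  have hm₀p : m₀ < p := by omega
  have hGk : G < k₀ := by omega
  -- factorial identity for V
  have hUV : V * k₀.factorial * m₀.factorial = (p+G).factorial := by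
    have := Nat.choose_mul_factorial_mul_factorial (show k₀ ≤ p+G by omega)
    rwa [show p+G-k₀ = m₀ by omega] at this
  have hdvdV : p ∣ V := by
    have hpfac : p ∣ (p+G).factorial := Nat.dvd_factorial hp.pos (by omega)
    rw [← hUV] at hpfac
    rcases (Nat.Prime.dvd_mul hp).mp hpfac with h | h
    · rcases (Nat.Prime.dvd_mul hp).mp h with h | h
      · exact h
      · exact absurd ((Nat.Prime.dvd_factorial hp).mp h) (by omega)
    · exact absurd ((Nat.Prime.dvd_factorial hp).mp h) (by omega)
  -- Lucas for N-1
  have hN1 : N - 1 = Q*p + (J+I) := by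
    have : p*Q = Q*p := by ring
    omega
  have hCmod : (N-1).choose J ≡ (J+I).choose J [MOD p] := by
    have := lucas2 p Q 0 (J+I) J (by omega) (by omega)
    rw [Nat.zero_mul, Nat.zero_add, Nat.choose_zero_right, Nat.one_mul] at this
    rw [← hN1] at this
    exact (ZMod.natCast_eq_natCast_iff _ _ _).mp this
  have hNmod : N ≡ J+I+1 [MOD p] := by
    show (N) % p = (J+I+1) % p
    rw [hN, show J+I+1 + p*Q = (J+I+1) + Q*p by ring, Nat.add_mul_mod_self_right]
  have hxmod : N * ((N-1).choose J) ≡ (J+I+1) * ((J+I).choose J) [MOD p] :=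
    Nat.ModEq.mul hNmod hCmod
  -- Lemma A instance
  have hAA := lemA p G k₀ hGk hk₀p N J
  have hnatmod : (N*p+G).choose (J*p+k₀) ≡ N * ((N-1).choose J) * V [MOD p^2] :=
    (ZMod.natCast_eq_natCast_iff _ _ _).mp hAA
  -- p does not divide the unit x
  have hndvd_x : ¬ p ∣ (J+I+1) * ((J+I).choose J) := by
    intro h
    rcases (Nat.Prime.dvd_mul hp).mp h with h | h
    · have := Nat.le_of_dvd (by omega) h; omega
    · have hcd : (J+I).choose J ∣ (J+I).factorial := by
        have hnat3 := Nat.choose_mul_factorial_mul_factorial (show J ≤ J+I by omega)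
        exact ⟨J.factorial * (J+I-J).factorial, by rw [← hnat3]; ring⟩
      have := (Nat.Prime.dvd_factorial hp).mp (h.trans hcd)
      omega
  have hndvd_x' : ¬ p ∣ N * ((N-1).choose J) := by
    intro h
    exact hndvd_x ((Nat.modEq_zero_iff_dvd).mp ((hxmod.symm.trans
      ((Nat.modEq_zero_iff_dvd).mpr h))))
  -- divisibility part
  have hdvd1 : p ∣ (N*p+G).choose (J*p+k₀) := by
    have h1 : (N*p+G).choose (J*p+k₀) ≡ N * ((N-1).choose J) * V [MOD p] :=
      hnatmod.of_dvd ⟨p, (sq p)⟩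
    exact (Nat.modEq_zero_iff_dvd).mp
      (h1.trans ((Nat.modEq_zero_iff_dvd).mpr (Dvd.dvd.mul_left hdvdV _)))
  have hndvd2 : ¬ (p^2 ∣ (N*p+G).choose (J*p+k₀)) := by
    intro h
    have h1 : p^2 ∣ N * ((N-1).choose J) * V := (Nat.modEq_zero_iff_dvd).mp
      (hnatmod.symm.trans ((Nat.modEq_zero_iff_dvd).mpr h))
    have hcop : Nat.Coprime (p^2) (N * ((N-1).choose J)) :=
      Nat.Coprime.pow_left 2 ((hp.coprime_iff_not_dvd).mpr hndvd_x')
    have h2 : p^2 ∣ V := hcop.dvd_of_dvd_mul_left h1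
    have h3 : p^2 ∣ (p+G).factorial := by
      rw [← hUV]; exact (h2.mul_right _).mul_right _
    -- contradiction with lemC
    have h4 := lemC p G
    have h5 : ((p:ℤ))^2 ∣ ((p+G).factorial : ℤ) := Int.natCast_dvd_natCast.mpr h3
    have h7 : ((p:ℤ))^2 ∣ -(p:ℤ) * (G.factorial : ℤ) :=
      Int.modEq_zero_iff_dvd.mp (h4.symm.trans (Int.modEq_zero_iff_dvd.mpr h5))
    have h6 : ((p:ℤ))^2 ∣ (p:ℤ) * (G.factorial : ℤ) := by
      rw [show -(p:ℤ) * (G.factorial : ℤ) = -((p:ℤ) * G.factorial) by ring] at h7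
      exact (Int.dvd_neg).mp h7
    obtain ⟨e, he⟩ := h6
    have h8 : (G.factorial : ℤ) = (p:ℤ) * e := by
      have hpne : (p:ℤ) ≠ 0 := by exact_mod_cast hp.ne_zero
      apply mul_left_cancel₀ hpne
      rw [he]; ring
    have h9 : (p:ℤ) ∣ (G.factorial : ℤ) := ⟨e, h8⟩
    have h10 : p ∣ G.factorial := Int.natCast_dvd_natCast.mp h9
    have := (Nat.Prime.dvd_factorial hp).mp h10
    omega
  have hm2 : ((p:ℤ))^2 = ((p^2 : ℕ) : ℤ) := by push_cast; ring
  refine ⟨⟨?_, ?_⟩, ?_⟩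
  · rw [hiC3]
    exact Int.natCast_dvd_natCast.mpr hdvd1
  · rw [hiC3, hm2]
    intro hcon
    exact hndvd2 (Int.natCast_dvd_natCast.mp hcon)
  · rw [hiC1, hiC2, hiC3, hiC4, hiC5, toNatCast _ _ h1b, hm2,
      ← ZMod.intCast_eq_intCast_iff]
    push_cast
    rw [hAA]
    have hstep2 : ((N * ((N-1).choose J) * V : ℕ) : ZMod (p^2))
        = (((J+I+1) * ((J+I).choose J) * V : ℕ) : ZMod (p^2)) := by
      rw [show N * ((N-1).choose J) * V = V * (N * ((N-1).choose J)) by ring,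
        show (J+I+1) * ((J+I).choose J) * V = V * ((J+I+1) * ((J+I).choose J)) by ring]
      exact mulmod p V _ _ hdvdV hxmod
    rw [hstep2]
    have hndk : ¬ p ∣ k₀.factorial := fun h => by
      have := (Nat.Prime.dvd_factorial hp).mp h; omega
    have hndm : ¬ p ∣ m₀.factorial := fun h => by
      have := (Nat.Prime.dvd_factorial hp).mp h; omega
    have hU : IsUnit ((k₀.factorial * m₀.factorial : ℕ) : ZMod (p^2)) := by
      rw [ZMod.isUnit_iff_coprime]
      exact (Nat.Coprime.mul ((hp.coprime_iff_not_dvd).mpr hndk).symm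
        ((hp.coprime_iff_not_dvd).mpr hndm).symm).pow_right 2
    apply hU.mul_left_cancel
    have e1 : ((k₀.factorial * m₀.factorial : ℕ) : ZMod (p^2))
        * ((((S+G).choose S : ℕ) : ZMod (p^2)) * (((S+G+J+I+1).choose (J+I+1) : ℕ) : ZMod (p^2))
          * (((J+I+1) * ((J+I).choose J) * V : ℕ) : ZMod (p^2)))
        = (((S+G).choose S : ℕ) : ZMod (p^2)) * (((S+G+J+I+1).choose (J+I+1) : ℕ) : ZMod (p^2))
          * (((J+I+1) : ℕ) : ZMod (p^2)) * (((J+I).choose J : ℕ) : ZMod (p^2))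
          * ((V * k₀.factorial * m₀.factorial : ℕ) : ZMod (p^2)) := by
      push_cast; ring
    rw [e1, hUV]
    have hCfac : (((p+G).factorial : ℕ) : ZMod (p^2))
        = -((p : ℕ) : ZMod (p^2)) * ((G.factorial : ℕ) : ZMod (p^2)) := by
      have h4 := lemC p G
      rw [hm2] at h4
      have h5 := (ZMod.intCast_eq_intCast_iff _ _ (p^2)).mpr h4
      push_cast at h5
      exact_mod_cast h5
    rw [hCfac]
    have hDint : (-(G.factorial : ℤ)) * ((S+G).choose S : ℕ) * ((S+G+J+I+1).choose (J+I+1) : ℕ)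
          * ((J+I+1 : ℕ) : ℤ) * ((J+I).choose J : ℕ)
        ≡ (-1)^S * ((S+G+J+I+1).choose J : ℕ) * ((A+G+J+I+1).choose I : ℕ)
          * (k₀.factorial : ℤ) * (m₀.factorial : ℤ) [ZMOD (p:ℤ)] := by
      rw [← ZMod.intCast_eq_intCast_iff]
      push_cast
      have hD := lemD p A S G J I hp_eq
      push_cast at hD
      rw [hk₀, hm₀]
      push_cast
      linear_combination hD
    have hfin := intMulLeft (p := (p:ℤ)) hDint
    rw [hm2] at hfin
    have hfin' := (ZMod.intCast_eq_intCast_iff _ _ (p^2)).mpr hfin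
    push_cast at hfin'
    push_cast
    linear_combination hfin'
end

section
/- Let s = b + c(p−1) and r = s + p^t(p−1)d with t ≥ 2, d ≥ 1, 2 ≤ b ≤ p, 0 ≤ c ≤ p−1, 0 ≤ m ≤ p−1, s ≥ m, and let l be an integer with 0 ≤ l ≤ m. Then ν_p( C(r−l, r−m) ) = ν_p( C(r−l, s−m) ), and moreover ν_p( C(r−l, r−m) ) equals: 0 if (b,c) = (p,0) and m = 0; 1 if (b,c) = (p,0), l = 0 and m ≠ 0; 0 if (b,c) = (p,0), l ≠ 0 and m ≠ 0; 0 if 0 ≤ m ≤ b−c and (b,c) ≠ (p,0); 1 if b−c+1 ≤ m ≤ b−c+p and 0 ≤ l ≤ b−c; 0 if b−c+1 ≤ m ≤ b−c+p and b−c+1 ≤ l ≤ b−c+p; 1 if b−c+p+1 ≤ m ≤ b−c+2p and b−c+1 ≤ l ≤ b−c+p; 0 if b−c+p+1 ≤ m ≤ b−c+2p and b−c+p+1 ≤ l ≤ b−c+2p. -/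
private lemma mod_helper (x r q p : ℕ) (hx : x = r + q * p) (hr : r < p) : x % p = r := by
  subst hx; rw [Nat.add_mul_mod_self_right, Nat.mod_eq_of_lt hr]

private lemma key_s12 (p : ℕ) (hp : p.Prime) (S M L D k : ℕ)
    (hLM : L ≤ M) (hMS : M ≤ S) (hMp : M < p) (hSp : S < p ^ 2) (hD : p ^ 2 ∣ D)
    (hk : k = S + D - M ∨ k = S - M) :
    padicValNat p ((S + D - L).choose k) =
      if p ≤ (M - L) + (S - M) % p then 1 else 0 := by
  haveI : Fact p.Prime := ⟨hp⟩
  have hp1 : 1 < p := hp.one_lt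
  have hppos : 0 < p := hp.pos
  have hp2 : p < p ^ 2 := by nlinarith
  have hkn : k ≤ S + D - L := by rcases hk with h | h <;> omega
  rw [padicValNat_choose hkn (Nat.lt_succ_self _)]
  have hPgen : ∀ i, 2 ≤ i → ¬ (p ^ i ≤ k % p ^ i + (S + D - L - k) % p ^ i) := by
    intro i hi
    have hpi2 : p ^ 2 ≤ p ^ i := Nat.pow_le_pow_right hppos hi
    have hpipos : 0 < p ^ i := Nat.pow_pos hppos
    have hdvdpi : p ^ 2 ∣ p ^ i := pow_dvd_pow p hi
    have hE2 : p ^ 2 ∣ D % p ^ i := (Nat.dvd_mod_iff hdvdpi).mpr hD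
    have hElt : D % p ^ i < p ^ i := Nat.mod_lt _ hpipos
    have hEb : p ^ 2 ≤ p ^ i - D % p ^ i :=
      Nat.le_of_dvd (by omega) (Nat.dvd_sub hdvdpi hE2)
    have hadd : ∀ a : ℕ, a < p ^ 2 → (a + D) % p ^ i = a + D % p ^ i := by
      intro a ha
      rw [Nat.add_mod, Nat.mod_eq_of_lt (lt_of_lt_of_le ha hpi2)]
      exact Nat.mod_eq_of_lt (by omega)
    have hml : (M - L) % p ^ i = M - L := Nat.mod_eq_of_lt (by omega)
    rcases hk with h | h
    · have hkr : k = (S - M) + D := by omega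
      have h2 : S + D - L - k = M - L := by omega
      rw [h2, hkr, hadd _ (by omega), hml]
      omega
    · have h2 : S + D - L - k = (M - L) + D := by omega
      rw [h2, h, hadd _ (by omega), Nat.mod_eq_of_lt (show S - M < p ^ i by omega)]
      omega
  have hP1 : (p ^ 1 ≤ k % p ^ 1 + (S + D - L - k) % p ^ 1) ↔ p ≤ (M - L) + (S - M) % p := by
    obtain ⟨e, he⟩ : p ∣ D := dvd_trans (dvd_pow_self p two_ne_zero) hD
    have hml : (M - L) % p = M - L := Nat.mod_eq_of_lt (by omega)
    rw [pow_one]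
    rcases hk with h | h
    · have hkr : k = (S - M) + D := by omega
      have h2 : S + D - L - k = M - L := by omega
      rw [h2, hkr, hml, he, Nat.add_mul_mod_self_left]
      omega
    · have h2 : S + D - L - k = (M - L) + D := by omega
      rw [h2, h, he, Nat.add_mul_mod_self_left, hml]
      omega
  have hcard : ((Finset.Ico 1 (Nat.log p (S + D - L) + 1)).filter
      fun i => p ^ i ≤ k % p ^ i + (S + D - L - k) % p ^ i)
      = if p ≤ (M - L) + (S - M) % p then {1} else ∅ := by
    split_ifs with hc
    · ext i
      simp only [Finset.mem_filter, Finset.mem_Ico, Finset.mem_singleton]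
      constructor
      · rintro ⟨⟨hi1, _⟩, hPi⟩
        by_contra hne
        exact hPgen i (by omega) hPi
      · rintro rfl
        have hmodle : (S - M) % p ≤ S - M := Nat.mod_le _ _
        have hpn : p ≤ S + D - L := by omega
        have hlog := Nat.log_pos hp1 hpn
        exact ⟨⟨le_refl 1, by omega⟩, hP1.mpr hc⟩
    · ext i
      simp only [Finset.mem_filter, Finset.mem_Ico, Finset.notMem_empty, iff_false, not_and]
      rintro ⟨hi1, _⟩ hPi
      by_cases hi2 : 2 ≤ i
      · exact hPgen i hi2 hPi
      · have : i = 1 := by omega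
        subst this
        exact hc (hP1.mp hPi)
  rw [hcard]
  split_ifs <;> simp

private lemma iC_natCast (u v : ℕ) (h : v ≤ u) : iC (u : ℤ) (v : ℤ) = (u.choose v : ℤ) := by
  unfold iC
  rw [if_pos ⟨by positivity, by exact_mod_cast h⟩]
  simp

/-- **Lemma 3.6, first part.** Let `p` be an odd prime, `s = b + c(p−1)`,
`r = s + p^t(p−1)d` with `t ≥ 2`, `d ≥ 1`, `2 ≤ b ≤ p`, `0 ≤ c ≤ p−1`, `0 ≤ m ≤ p−1`,
`s ≥ m`, `0 ≤ l ≤ m`. Then `ν_p(C(r−l, r−m)) = ν_p(C(r−l, s−m))`, and `ν_p(C(r−l, r−m))`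
takes the stated value `0` or `1` in each of the listed cases. -/
theorem stmt_12 (p : ℕ) (hp : p.Prime) (hodd : Odd p)
    (b c m l s r : ℤ) (t d : ℕ)
    (ht : 2 ≤ t) (hd : 1 ≤ d)
    (hb2 : 2 ≤ b) (hbp : b ≤ (p : ℤ)) (hc0 : 0 ≤ c) (hcp : c ≤ (p : ℤ) - 1)
    (hm0 : 0 ≤ m) (hmp : m ≤ (p : ℤ) - 1)
    (hs : s = b + c * ((p : ℤ) - 1))
    (hr : r = s + (p : ℤ) ^ t * ((p : ℤ) - 1) * (d : ℤ))
    (hms : m ≤ s) (hl0 : 0 ≤ l) (hlm : l ≤ m) :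
    padicValInt p (iC (r - l) (r - m)) = padicValInt p (iC (r - l) (s - m)) ∧
    ((b = (p : ℤ) ∧ c = 0 ∧ m = 0) → padicValInt p (iC (r - l) (r - m)) = 0) ∧
    ((b = (p : ℤ) ∧ c = 0 ∧ l = 0 ∧ m ≠ 0) → padicValInt p (iC (r - l) (r - m)) = 1) ∧
    ((b = (p : ℤ) ∧ c = 0 ∧ l ≠ 0 ∧ m ≠ 0) → padicValInt p (iC (r - l) (r - m)) = 0) ∧
    ((0 ≤ m ∧ m ≤ b - c ∧ ¬ (b = (p : ℤ) ∧ c = 0)) →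
      padicValInt p (iC (r - l) (r - m)) = 0) ∧
    ((b - c + 1 ≤ m ∧ m ≤ b - c + p ∧ 0 ≤ l ∧ l ≤ b - c) →
      padicValInt p (iC (r - l) (r - m)) = 1) ∧
    ((b - c + 1 ≤ m ∧ m ≤ b - c + p ∧ b - c + 1 ≤ l ∧ l ≤ b - c + p) →
      padicValInt p (iC (r - l) (r - m)) = 0) ∧
    ((b - c + p + 1 ≤ m ∧ m ≤ b - c + 2 * p ∧ b - c + 1 ≤ l ∧ l ≤ b - c + p) →
      padicValInt p (iC (r - l) (r - m)) = 1) ∧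
    ((b - c + p + 1 ≤ m ∧ m ≤ b - c + 2 * p ∧ b - c + p + 1 ≤ l ∧ l ≤ b - c + 2 * p) →
      padicValInt p (iC (r - l) (r - m)) = 0) := by
  have hp1 : 1 < p := hp.one_lt
  have hs0 : 0 ≤ s := le_trans hm0 hms
  have hr0 : 0 ≤ r := by
    have h1 : (0:ℤ) ≤ (p : ℤ) ^ t * ((p : ℤ) - 1) * (d : ℤ) :=
      mul_nonneg (mul_nonneg (by positivity) (by omega)) (by positivity)
    omega
  lift b to ℕ using (by omega) with B
  lift c to ℕ using hc0 with C
  lift m to ℕ using hm0 with M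
  lift l to ℕ using hl0 with L
  lift s to ℕ using hs0 with S
  lift r to ℕ using hr0 with R
  set D : ℕ := p ^ t * (p - 1) * d with hDdef
  have hDcast : (D : ℤ) = (p : ℤ) ^ t * ((p : ℤ) - 1) * (d : ℤ) := by
    have h1 : ((p - 1 : ℕ) : ℤ) = (p : ℤ) - 1 := by omega
    rw [hDdef]
    push_cast [h1]
    ring
  have hRN : R = S + D := by
    have : (R : ℤ) = (S : ℤ) + (D : ℤ) := by rw [hDcast]; linarith [hr]
    exact_mod_cast this
  have hD2 : p ^ 2 ∣ D := Dvd.dvd.mul_right (Dvd.dvd.mul_right (pow_dvd_pow p ht) _) _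
  have hMS : M ≤ S := by exact_mod_cast hms
  have hLM : L ≤ M := by exact_mod_cast hlm
  have hMp : M < p := by omega
  have hSp2 : S < p ^ 2 := by
    have h1 : (C:ℤ) * ((p:ℤ) - 1) ≤ ((p:ℤ) - 1) * ((p:ℤ) - 1) :=
      mul_le_mul_of_nonneg_right hcp (by omega)
    have h2 : (S:ℤ) < (p:ℤ) ^ 2 := by
      nlinarith [hs, hbp, show (2:ℤ) ≤ (p:ℤ) by omega]
    exact_mod_cast h2
  have key1 : padicValInt p (iC ((R:ℤ) - (L:ℤ)) ((R:ℤ) - (M:ℤ))) =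
      if p ≤ (M - L) + (S - M) % p then 1 else 0 := by
    have e1 : ((R:ℤ) - (L:ℤ)) = ((R - L : ℕ) : ℤ) := by omega
    have e2 : ((R:ℤ) - (M:ℤ)) = ((R - M : ℕ) : ℤ) := by omega
    rw [e1, e2, iC_natCast _ _ (by omega), padicValInt.of_nat]
    have e3 : R - L = S + D - L := by omega
    have e4 : R - M = S + D - M := by omega
    rw [e3, e4]
    exact key_s12 p hp S M L D _ hLM hMS hMp hSp2 hD2 (Or.inl rfl)
  have key2 : padicValInt p (iC ((R:ℤ) - (L:ℤ)) ((S:ℤ) - (M:ℤ))) =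
      if p ≤ (M - L) + (S - M) % p then 1 else 0 := by
    have e1 : ((R:ℤ) - (L:ℤ)) = ((R - L : ℕ) : ℤ) := by omega
    have e2 : ((S:ℤ) - (M:ℤ)) = ((S - M : ℕ) : ℤ) := by omega
    rw [e1, e2, iC_natCast _ _ (by omega), padicValInt.of_nat]
    have e3 : R - L = S + D - L := by omega
    rw [e3]
    exact key_s12 p hp S M L D _ hLM hMS hMp hSp2 hD2 (Or.inr rfl)
  refine ⟨key1.trans key2.symm, ?_, ?_, ?_, ?_, ?_, ?_, ?_, ?_⟩
  · rintro ⟨h1, h2, h3⟩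
    rw [key1]
    have hSval : S = p := by
      have : (S : ℤ) = (p : ℤ) := by rw [hs, h1, h2]; ring
      exact_mod_cast this
    have hM0 : M = 0 := by exact_mod_cast h3
    have hmod : (S - M) % p = 0 := by rw [hSval, hM0, Nat.sub_zero, Nat.mod_self]
    rw [hmod, if_neg (by omega)]
  · rintro ⟨h1, h2, h3, h4⟩
    rw [key1]
    have hSval : S = p := by
      have : (S : ℤ) = (p : ℤ) := by rw [hs, h1, h2]; ring
      exact_mod_cast this
    have hM0 : M ≠ 0 := by simpa using h4
    have hL0 : L = 0 := by exact_mod_cast h3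
    have hmod : (S - M) % p = S - M := Nat.mod_eq_of_lt (by omega)
    rw [hmod, if_pos (by omega)]
  · rintro ⟨h1, h2, h3, h4⟩
    rw [key1]
    have hSval : S = p := by
      have : (S : ℤ) = (p : ℤ) := by rw [hs, h1, h2]; ring
      exact_mod_cast this
    have hM0 : M ≠ 0 := by simpa using h4
    have hL0 : L ≠ 0 := by simpa using h3
    have hmod : (S - M) % p = S - M := Nat.mod_eq_of_lt (by omega)
    rw [hmod, if_neg (by omega)]
  · rintro ⟨h1, h2, h3⟩
    rw [key1]
    have hsplit : S - M = (B - C - M) + C * p := by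
      have e1 : ((S - M : ℕ) : ℤ) = (S:ℤ) - (M:ℤ) := by omega
      have e2 : ((B - C - M : ℕ) : ℤ) = (B:ℤ) - (C:ℤ) - (M:ℤ) := by omega
      have : ((S - M : ℕ) : ℤ) = ((B - C - M : ℕ) : ℤ) + (C : ℤ) * (p : ℤ) := by
        rw [e1, e2]; linear_combination hs
      exact_mod_cast this
    have hbcm : B - C - M < p := by
      rcases Nat.eq_or_lt_of_le (show B - C - M ≤ p by omega) with h | h
      · exfalso
        apply h3
        refine ⟨?_, ?_⟩
        · exact_mod_cast (show B = p by omega)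
        · exact_mod_cast (show C = 0 by omega)
      · exact h
    rw [mod_helper _ _ _ _ hsplit hbcm, if_neg (by omega)]
  · rintro ⟨h1, h2, h3, h4⟩
    rw [key1]
    have hc1 : 1 ≤ C := by
      by_contra hcon
      have hC0 : C = 0 := by omega
      subst hC0
      simp only [Nat.cast_zero, zero_mul, add_zero] at hs
      omega
    have hsplit : S - M = (B + p - C - M) + (C - 1) * p := by
      have e1 : ((S - M : ℕ) : ℤ) = (S:ℤ) - (M:ℤ) := by omega
      have e2 : ((B + p - C - M : ℕ) : ℤ) = (B:ℤ) + (p:ℤ) - (C:ℤ) - (M:ℤ) := by omega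
      have e3 : ((C - 1 : ℕ) : ℤ) = (C:ℤ) - 1 := by omega
      have : ((S - M : ℕ) : ℤ) = ((B + p - C - M : ℕ) : ℤ) + ((C - 1 : ℕ) : ℤ) * (p : ℤ) := by
        rw [e1, e2, e3]; linear_combination hs
      exact_mod_cast this
    rw [mod_helper _ _ _ _ hsplit (by omega), if_pos (by omega)]
  · rintro ⟨h1, h2, h3, h4⟩
    rw [key1]
    have hc1 : 1 ≤ C := by
      by_contra hcon
      have hC0 : C = 0 := by omega
      subst hC0
      simp only [Nat.cast_zero, zero_mul, add_zero] at hs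
      omega
    have hsplit : S - M = (B + p - C - M) + (C - 1) * p := by
      have e1 : ((S - M : ℕ) : ℤ) = (S:ℤ) - (M:ℤ) := by omega
      have e2 : ((B + p - C - M : ℕ) : ℤ) = (B:ℤ) + (p:ℤ) - (C:ℤ) - (M:ℤ) := by omega
      have e3 : ((C - 1 : ℕ) : ℤ) = (C:ℤ) - 1 := by omega
      have : ((S - M : ℕ) : ℤ) = ((B + p - C - M : ℕ) : ℤ) + ((C - 1 : ℕ) : ℤ) * (p : ℤ) := by
        rw [e1, e2, e3]; linear_combination hs
      exact_mod_cast this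
    rw [mod_helper _ _ _ _ hsplit (by omega), if_neg (by omega)]
  · rintro ⟨h1, h2, h3, h4⟩
    rw [key1]
    have hc2 : 2 ≤ C := by
      by_contra hcon
      interval_cases C <;>
        simp only [Nat.cast_zero, Nat.cast_one, zero_mul, one_mul, add_zero] at hs <;> omega
    have hsplit : S - M = (B + 2 * p - C - M) + (C - 2) * p := by
      have e1 : ((S - M : ℕ) : ℤ) = (S:ℤ) - (M:ℤ) := by omega
      have e2 : ((B + 2 * p - C - M : ℕ) : ℤ) = (B:ℤ) + 2 * (p:ℤ) - (C:ℤ) - (M:ℤ) := by omega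
      have e3 : ((C - 2 : ℕ) : ℤ) = (C:ℤ) - 2 := by omega
      have : ((S - M : ℕ) : ℤ) = ((B + 2 * p - C - M : ℕ) : ℤ) + ((C - 2 : ℕ) : ℤ) * (p : ℤ) := by
        rw [e1, e2, e3]; linear_combination hs
      exact_mod_cast this
    rw [mod_helper _ _ _ _ hsplit (by omega), if_pos (by omega)]
  · rintro ⟨h1, h2, h3, h4⟩
    rw [key1]
    have hc2 : 2 ≤ C := by
      by_contra hcon
      interval_cases C <;>
        simp only [Nat.cast_zero, Nat.cast_one, zero_mul, one_mul, add_zero] at hs <;> omega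
    have hsplit : S - M = (B + 2 * p - C - M) + (C - 2) * p := by
      have e1 : ((S - M : ℕ) : ℤ) = (S:ℤ) - (M:ℤ) := by omega
      have e2 : ((B + 2 * p - C - M : ℕ) : ℤ) = (B:ℤ) + 2 * (p:ℤ) - (C:ℤ) - (M:ℤ) := by omega
      have e3 : ((C - 2 : ℕ) : ℤ) = (C:ℤ) - 2 := by omega
      have : ((S - M : ℕ) : ℤ) = ((B + 2 * p - C - M : ℕ) : ℤ) + ((C - 2 : ℕ) : ℤ) * (p : ℤ) := by
        rw [e1, e2, e3]; linear_combination hs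
      exact_mod_cast this
    rw [mod_helper _ _ _ _ hsplit (by omega), if_neg (by omega)]
end

section
/- Let p be a prime and let b, c, m be nonnegative integers with m + c ≤ b and b − m ≤ p − 2. Then the (c+1)×(c+1) matrix B over the field F_p with rows indexed by 0 ≤ j ≤ c and columns indexed by 0 ≤ i ≤ c, whose (j,i) entry is the reduction modulo p of C(b−m−c+1+i, b−m−j), is invertible. -/
open Matrix Finset

lemma det_pascal_shift (n : ℕ) :
    (Matrix.of fun k i : Fin n => (((i.1 + 1).choose k.1 : ℕ) : ℚ)).det = 1 := by
  set L : Matrix (Fin n) (Fin n) ℚ :=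
    Matrix.of fun k t : Fin n => if (k : ℕ) = t then 1 else if (k : ℕ) = (t : ℕ) + 1 then 1 else 0
    with hL
  set U : Matrix (Fin n) (Fin n) ℚ :=
    Matrix.of fun t i : Fin n => (((i : ℕ).choose (t : ℕ) : ℕ) : ℚ) with hU
  have hLU : (Matrix.of fun k i : Fin n => (((i.1 + 1).choose k.1 : ℕ) : ℚ)) = L * U := by
    ext k i
    rw [Matrix.mul_apply]
    have hterm : ∀ t : Fin n, L k t * U t i =
        (if k = t then (((i : ℕ).choose (t : ℕ) : ℕ) : ℚ) else 0)
        + (if (k : ℕ) = (t : ℕ) + 1 then (((i : ℕ).choose (t : ℕ) : ℕ) : ℚ) else 0) := by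
      intro t
      simp only [hL, hU, Matrix.of_apply]
      by_cases h1 : (k : ℕ) = (t : ℕ)
      · have hk : k = t := Fin.ext h1
        have h2 : ¬ (k : ℕ) = (t : ℕ) + 1 := by omega
        simp [h1, hk, h2]
      · have hk : ¬ k = t := fun h => h1 (by rw [h])
        by_cases h2 : (k : ℕ) = (t : ℕ) + 1
        · simp [h1, hk, h2]
        · simp [h1, hk, h2]
    simp only [Matrix.of_apply]
    rw [Finset.sum_congr rfl fun t _ => hterm t, Finset.sum_add_distrib]
    have hsum1 : (∑ t : Fin n, if k = t then (((i : ℕ).choose (t : ℕ) : ℕ) : ℚ) else 0)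
        = (((i : ℕ).choose (k : ℕ) : ℕ) : ℚ) := by
      rw [Finset.sum_ite_eq]
      simp
    rw [hsum1]
    by_cases hk0 : (k : ℕ) = 0
    · have : (∑ t : Fin n, if (k : ℕ) = (t : ℕ) + 1 then (((i : ℕ).choose (t : ℕ) : ℕ) : ℚ) else 0) = 0 :=
        Finset.sum_eq_zero fun t _ => if_neg (by omega)
      rw [this, hk0]
      norm_num
    · obtain ⟨k', hk'⟩ : ∃ k', (k : ℕ) = k' + 1 := ⟨(k : ℕ) - 1, by omega⟩
      have hk'n : k' < n := by have := k.isLt; omega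
      have hsum2 : (∑ t : Fin n, if (k : ℕ) = (t : ℕ) + 1 then (((i : ℕ).choose (t : ℕ) : ℕ) : ℚ) else 0)
          = (((i : ℕ).choose k' : ℕ) : ℚ) := by
        rw [Finset.sum_eq_single (⟨k', hk'n⟩ : Fin n)]
        · rw [if_pos (by simp [hk'])]
        · intro t _ ht
          refine if_neg fun h => ht (Fin.ext ?_)
          simp only []
          omega
        · intro h; exact absurd (Finset.mem_univ _) h
      rw [hsum2]
      have hcs : ((i : ℕ) + 1).choose ((k : ℕ)) = (i : ℕ).choose k' + (i : ℕ).choose (k' + 1) := by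
        rw [hk']; exact Nat.choose_succ_succ _ _
      rw [hcs, hk']
      push_cast
      ring
  rw [hLU, Matrix.det_mul]
  have hdetL : L.det = 1 := by
    rw [Matrix.det_of_lowerTriangular L (fun s t h => ?_)]
    · refine Finset.prod_eq_one fun t _ => ?_
      simp [hL]
    · have hst : (s : ℕ) < (t : ℕ) := h
      simp only [hL, Matrix.of_apply]
      rw [if_neg (by omega), if_neg (by omega)]
  have hdetU : U.det = 1 := by
    rw [Matrix.det_of_upperTriangular (fun s t h => ?_)]
    · refine Finset.prod_eq_one fun t _ => ?_
      simp [hU]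
    · have : (t : ℕ) < (s : ℕ) := h
      simp only [hU, Matrix.of_apply]
      rw [Nat.choose_eq_zero_of_lt this]
      simp
  rw [hdetL, hdetU, mul_one]

open Matrix Finset

lemma entry_factor (a N c j' i' : ℕ) (ha : a = N - c + 1) (hcN : c ≤ N) (hj : j' ≤ c)
    (hpos : c ≤ i' + 1 + j') :
    (((a + i').choose (N - j') : ℕ) : ℚ) =
      (((c - j').factorial : ℕ) : ℚ) / (((N - j').factorial : ℕ) : ℚ) *
        (((((a + i').factorial : ℕ) : ℚ) / (((i' + 1).factorial : ℕ) : ℚ)) *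
        (((i' + 1).choose (c - j') : ℕ) : ℚ)) := by
  set n1 := a + i'
  set k1 := N - j'
  set n2 := i' + 1
  set k2 := c - j'
  set d := i' + 1 + j' - c with hd
  have hk1 : k1 ≤ n1 := by omega
  have hk2 : k2 ≤ n2 := by omega
  have hd1 : n1 - k1 = d := by omega
  have hd2 : n2 - k2 = d := by omega
  have e1 : n1.choose k1 * k1.factorial * d.factorial = n1.factorial := by
    rw [← hd1]; exact Nat.choose_mul_factorial_mul_factorial hk1
  have e2 : n2.choose k2 * k2.factorial * d.factorial = n2.factorial := by
    rw [← hd2]; exact Nat.choose_mul_factorial_mul_factorial hk2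
  have natid : n1.choose k1 * (k1.factorial * n2.factorial)
      = k2.factorial * n1.factorial * n2.choose k2 := by
    apply Nat.eq_of_mul_eq_mul_right (Nat.factorial_pos d)
    calc n1.choose k1 * (k1.factorial * n2.factorial) * d.factorial
        = (n1.choose k1 * k1.factorial * d.factorial) * n2.factorial := by ring
      _ = n1.factorial * n2.factorial := by rw [e1]
      _ = n1.factorial * (n2.choose k2 * k2.factorial * d.factorial) := by rw [e2]
      _ = k2.factorial * n1.factorial * n2.choose k2 * d.factorial := by ring
  have hq : ((n1.choose k1 : ℕ) : ℚ) * (((k1.factorial : ℕ) : ℚ) * ((n2.factorial : ℕ) : ℚ))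
      = ((k2.factorial : ℕ) : ℚ) * ((n1.factorial : ℕ) : ℚ) * ((n2.choose k2 : ℕ) : ℚ) := by
    exact_mod_cast natid
  have hne1 : ((k1.factorial : ℕ) : ℚ) ≠ 0 := Nat.cast_ne_zero.2 (Nat.factorial_pos _).ne'
  have hne2 : ((n2.factorial : ℕ) : ℚ) ≠ 0 := Nat.cast_ne_zero.2 (Nat.factorial_pos _).ne'
  field_simp
  linarith [hq]

/-- **Lemma 3.7.** Let `p` be a prime and `b, c, m` nonnegative integers with `m + c ≤ b`
(i.e. `m ≤ b − c`) and `b − m ≤ p − 2`. The `(c+1)×(c+1)` matrix over `F_p` with `(j,i)`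
entry `C(b−m−c+1+i, b−m−j) mod p` (for `0 ≤ j, i ≤ c`) is invertible. -/
theorem stmt_15 (p : ℕ) (hp : p.Prime) (b c m : ℕ)
    (h1 : m + c ≤ b) (h2 : b - m ≤ p - 2) :
    IsUnit (Matrix.det (Matrix.of fun j i : Fin (c + 1) =>
      (((b - m - c + 1 + i.val).choose (b - m - j.val) : ℕ) : ZMod p))) := by
  haveI : Fact p.Prime := ⟨hp⟩
  set N := b - m with hN
  set a := b - m - c + 1 with haa
  have ha : a = N - c + 1 := rfl
  have hcN : c ≤ N := by omega
  have hNp : N + 1 < p := by have := hp.two_le; omega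
  set Mz : Matrix (Fin (c + 1)) (Fin (c + 1)) ℤ :=
    Matrix.of fun j i : Fin (c + 1) => (((a + i.1).choose (N - j.1) : ℕ) : ℤ) with hMz
  have hdet : (Matrix.det (Matrix.of fun j i : Fin (c + 1) =>
      (((b - m - c + 1 + i.val).choose (b - m - j.val) : ℕ) : ZMod p)))
      = ((Mz.det : ℤ) : ZMod p) := by
    rw [show ((Mz.det : ℤ) : ZMod p) = (Int.castRingHom (ZMod p)) Mz.det from rfl,
      RingHom.map_det]
    congr 1
    ext j i
    simp [hMz, RingHom.mapMatrix_apply, Matrix.map_apply]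
    rfl
  rw [hdet]
  set u : Fin (c + 1) → ℚ := fun j => (((c - j.1).factorial : ℕ) : ℚ) / (((N - j.1).factorial : ℕ) : ℚ) with hu
  set v : Fin (c + 1) → ℚ := fun i => (((a + i.1).factorial : ℕ) : ℚ) / (((i.1 + 1).factorial : ℕ) : ℚ) with hv
  set W : Matrix (Fin (c + 1)) (Fin (c + 1)) ℚ :=
    Matrix.of fun j i : Fin (c + 1) => (((i.1 + 1).choose (c - j.1) : ℕ) : ℚ) with hW
  set P : Matrix (Fin (c + 1)) (Fin (c + 1)) ℚ :=
    Matrix.of fun k i : Fin (c + 1) => (((i.1 + 1).choose k.1 : ℕ) : ℚ) with hP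
  have hMQ : (Mz.map (Int.cast : ℤ → ℚ)) =
      Matrix.of (fun j i : Fin (c + 1) =>
        u j * ((Matrix.of fun j' i' : Fin (c + 1) => v i' * W j' i') j i)) := by
    ext j i
    simp only [hMz, Matrix.map_apply, Matrix.of_apply, Int.cast_natCast, hu, hv, hW]
    by_cases hpos : c ≤ i.1 + 1 + j.1
    · exact entry_factor a N c j.1 i.1 ha hcN (by omega) hpos
    · have hz1 : (a + i.1) < (N - j.1) := by omega
      have hz2 : (i.1 + 1) < (c - j.1) := by omega
      rw [Nat.choose_eq_zero_of_lt hz1, Nat.choose_eq_zero_of_lt hz2]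
      simp
  have hWP : W = P.submatrix Fin.revPerm id := by
    ext j i
    have hrev : ((Fin.revPerm j : Fin (c + 1)) : ℕ) = c - j.1 := by
      simp only [Fin.revPerm_apply, Fin.val_rev]
      omega
    simp only [hW, hP, Matrix.of_apply, Matrix.submatrix_apply, id_eq, hrev]
  have hdetP : P.det = 1 := det_pascal_shift (c + 1)
  set s : ℤ := ((Equiv.Perm.sign (Fin.revPerm : Equiv.Perm (Fin (c + 1)))) : ℤ) with hs
  have hss : s * s = 1 := by
    rw [hs, ← Units.val_mul]
    norm_num
  have hdetW : W.det = (s : ℚ) := by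
    rw [hWP, Matrix.det_permute, hdetP, mul_one]
  have hcast : ((Mz.det : ℤ) : ℚ) = (Mz.map (Int.cast : ℤ → ℚ)).det := by
    rw [show ((Mz.det : ℤ) : ℚ) = (Int.castRingHom ℚ) Mz.det from rfl, RingHom.map_det,
      RingHom.mapMatrix_apply]
    rfl
  have hdetQ : ((Mz.det : ℤ) : ℚ) = (∏ j, u j) * ((∏ i, v i) * (s : ℚ)) := by
    rw [hcast, hMQ, Matrix.det_mul_column u, Matrix.det_mul_row v, hdetW]
  -- clear denominators
  set Dn : ℕ := (∏ j : Fin (c + 1), (N - j.1).factorial) * (∏ i : Fin (c + 1), (i.1 + 1).factorial) with hDn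
  set En : ℕ := (∏ j : Fin (c + 1), (c - j.1).factorial) * (∏ i : Fin (c + 1), (a + i.1).factorial) with hEn
  have hprodu : (∏ j, u j) * ((∏ j : Fin (c + 1), (N - j.1).factorial : ℕ) : ℚ)
      = ((∏ j : Fin (c + 1), (c - j.1).factorial : ℕ) : ℚ) := by
    rw [hu]
    push_cast
    rw [Finset.prod_div_distrib]
    rw [div_mul_cancel₀]
    apply Finset.prod_ne_zero_iff.2
    intro j _
    exact Nat.cast_ne_zero.2 (Nat.factorial_pos _).ne'
  have hprodv : (∏ i, v i) * ((∏ i : Fin (c + 1), (i.1 + 1).factorial : ℕ) : ℚ)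
      = ((∏ i : Fin (c + 1), (a + i.1).factorial : ℕ) : ℚ) := by
    rw [hv]
    push_cast
    rw [Finset.prod_div_distrib]
    rw [div_mul_cancel₀]
    apply Finset.prod_ne_zero_iff.2
    intro i _
    exact Nat.cast_ne_zero.2 (Nat.factorial_pos _).ne'
  have hqeq : ((Mz.det : ℤ) : ℚ) * ((Dn : ℕ) : ℚ) = ((s : ℚ)) * ((En : ℕ) : ℚ) := by
    rw [hdetQ, hDn, hEn]
    push_cast
    calc (∏ j, u j) * ((∏ i, v i) * (s : ℚ)) *
          ((∏ j : Fin (c + 1), ((N - j.1).factorial : ℚ)) * (∏ i : Fin (c + 1), ((i.1 + 1).factorial : ℚ)))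
        = (s : ℚ) * (((∏ j, u j) * (∏ j : Fin (c + 1), ((N - j.1).factorial : ℚ))) *
            ((∏ i, v i) * (∏ i : Fin (c + 1), ((i.1 + 1).factorial : ℚ)))) := by ring
      _ = (s : ℚ) * ((∏ j : Fin (c + 1), ((c - j.1).factorial : ℚ)) * (∏ i : Fin (c + 1), ((a + i.1).factorial : ℚ))) := by
          rw [show ((∏ j, u j) * (∏ j : Fin (c + 1), ((N - j.1).factorial : ℚ))) = (∏ j : Fin (c + 1), ((c - j.1).factorial : ℚ)) from by exact_mod_cast hprodu,
            show ((∏ i, v i) * (∏ i : Fin (c + 1), ((i.1 + 1).factorial : ℚ))) = (∏ i : Fin (c + 1), ((a + i.1).factorial : ℚ)) from by exact_mod_cast hprodv]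
  have hzeq : Mz.det * (Dn : ℤ) = s * (En : ℤ) := by exact_mod_cast hqeq
  -- p does not divide En
  have hpEn : ¬ (p : ℤ) ∣ (En : ℤ) := by
    rw [Int.natCast_dvd_natCast]
    intro hpd
    rw [hEn] at hpd
    rcases (Nat.Prime.dvd_mul hp).1 hpd with h | h
    · obtain ⟨j, -, hj⟩ := hp.prime.exists_mem_finset_dvd h
      have := (Nat.Prime.dvd_factorial hp).1 hj
      omega
    · obtain ⟨i, -, hi⟩ := hp.prime.exists_mem_finset_dvd h
      have := (Nat.Prime.dvd_factorial hp).1 hi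
      have : a + i.1 ≤ N + 1 := by have := i.isLt; omega
      omega
  have hInt : ¬ (p : ℤ) ∣ Mz.det := by
    intro hd
    apply hpEn
    have h1' : (p : ℤ) ∣ s * (En : ℤ) := hzeq ▸ hd.mul_right (Dn : ℤ)
    have : (En : ℤ) = s * (s * (En : ℤ)) := by rw [← mul_assoc, hss, one_mul]
    rw [this]
    exact h1'.mul_left s
  have : ((Mz.det : ℤ) : ZMod p) ≠ 0 := by
    rw [Ne, ZMod.intCast_zmod_eq_zero_iff_dvd]
    exact hInt
  exact isUnit_iff_ne_zero.2 this
end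

section
/- Let p be a prime and let c, m be positive integers with c ≤ m. Then the c×c matrix B over the field F_p with rows indexed by 1 ≤ j ≤ c and columns indexed by 0 ≤ i ≤ c−1, whose (j,i) entry is the reduction modulo p of C(m−c+j, i), is invertible. -/
theorem aux_decomp (p : ℕ) (c n : ℕ) :
    (Matrix.of fun j i : Fin c => (((n + j.val).choose i.val : ℕ) : ZMod p)) =
    (Matrix.of fun j k : Fin c => ((j.val.choose k.val : ℕ) : ZMod p)) *
    (Matrix.of fun k i : Fin c =>
      if k.val ≤ i.val then ((n.choose (i.val - k.val) : ℕ) : ZMod p) else 0) := by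
  ext j i
  simp only [Matrix.mul_apply, Matrix.of_apply]
  have h1 : (n + j.val).choose i.val = (j.val + n).choose i.val := by rw [Nat.add_comm]
  rw [h1, Nat.add_choose_eq, Finset.Nat.sum_antidiagonal_eq_sum_range_succ_mk]
  have hic : i.val + 1 ≤ c := i.isLt
  push_cast
  rw [show (∑ x : Fin c, ((j.val.choose x.val : ℕ) : ZMod p) *
      (if x.val ≤ i.val then ((n.choose (i.val - x.val) : ℕ) : ZMod p) else 0)) =
    ∑ x ∈ Finset.range c, ((j.val.choose x : ℕ) : ZMod p) *
      (if x ≤ i.val then ((n.choose (i.val - x) : ℕ) : ZMod p) else 0)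
    from Fin.sum_univ_eq_sum_range
      (fun x => ((j.val.choose x : ℕ) : ZMod p) *
        (if x ≤ i.val then ((n.choose (i.val - x) : ℕ) : ZMod p) else 0)) c]
  rw [← Finset.sum_range_add_sum_Ico _ hic]
  have h2 : ∀ k ∈ Finset.Ico (i.val + 1) c,
      ((j.val.choose k : ℕ) : ZMod p) *
        (if k ≤ i.val then ((n.choose (i.val - k) : ℕ) : ZMod p) else 0) = 0 := by
    intro k hk
    rw [Finset.mem_Ico] at hk
    rw [if_neg (by omega)]
    ring
  rw [Finset.sum_congr rfl h2, Finset.sum_const_zero, add_zero]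
  apply Finset.sum_congr rfl
  intro k hk
  rw [Finset.mem_range] at hk
  rw [if_pos (by omega)]

/-- **Lemma 3.8.** Let `p` be a prime and `c, m` positive integers with `c ≤ m`. The `c×c`
matrix over `F_p` with rows indexed by `1 ≤ j ≤ c`, columns by `0 ≤ i ≤ c−1`, and `(j,i)`
entry `C(m−c+j, i) mod p`, is invertible. -/
theorem stmt_16 (p : ℕ) (hp : p.Prime) (c m : ℕ) (hc : 1 ≤ c) (hm : 1 ≤ m) (hcm : c ≤ m) :
    IsUnit (Matrix.det (Matrix.of fun j i : Fin c =>
      (((m - c + (j.val + 1)).choose i.val : ℕ) : ZMod p))) := by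
  have key : (Matrix.of fun j i : Fin c =>
      (((m - c + (j.val + 1)).choose i.val : ℕ) : ZMod p)) =
      (Matrix.of fun j i : Fin c => (((m - c + 1 + j.val).choose i.val : ℕ) : ZMod p)) := by
    ext j i
    simp only [Matrix.of_apply]
    have h : m - c + (j.val + 1) = m - c + 1 + j.val := by omega
    rw [h]
  rw [key, aux_decomp, Matrix.det_mul]
  have hA : Matrix.det (Matrix.of fun j k : Fin c =>
      ((j.val.choose k.val : ℕ) : ZMod p)) = 1 := by
    rw [Matrix.det_of_lowerTriangular]
    · simp [Nat.choose_self]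
    · intro a b hab
      simp [Nat.choose_eq_zero_of_lt (show a.val < b.val from hab)]
  have hB : Matrix.det (Matrix.of fun k i : Fin c =>
      if k.val ≤ i.val then (((m - c + 1).choose (i.val - k.val) : ℕ) : ZMod p) else 0) = 1 := by
    rw [Matrix.det_of_upperTriangular]
    · simp
    · intro a b hab
      simp only [id] at hab
      have : ¬ a.val ≤ b.val := Nat.not_le.2 hab
      simp only [Matrix.of_apply, this, if_false]
  rw [hA, hB, one_mul]
  exact isUnit_one
end

section
/- Let b, c, m be nonnegative integers with m + c ≤ b. Define a sequence of integers (β_j)_{0 ≤ j ≤ c} by β_0 = 1, β_1 = −C(b−m−c+1, 1) = −(b−m−c+1), and for 2 ≤ j ≤ c, β_j = −Σ_{l = c−j+1}^{c} C(b−m−c+1, b−m−(j+l−1)) · β_{c−l}. Then β_j = (−1)^j · C(b−m−c+j, j) for all 0 ≤ j ≤ c. -/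
open PowerSeries in
lemma coeff_one_sub_pow (n q : ℕ) :
    (PowerSeries.coeff (R := ℤ) q) ((1 - PowerSeries.X) ^ n) = (-1 : ℤ) ^ q * n.choose q := by
  have : (1 - PowerSeries.X : ℤ⟦X⟧) ^ n
      = ∑ k ∈ Finset.range (n + 1), PowerSeries.C (R := ℤ) ((-1) ^ k * n.choose k) * PowerSeries.X ^ k := by
    rw [sub_eq_add_neg, add_comm, add_pow]
    refine Finset.sum_congr rfl fun k hk => ?_
    rw [neg_pow]
    simp only [map_mul, map_pow, map_neg, map_one, one_pow, mul_one, map_natCast]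
    ring
  rw [this, map_sum]
  simp only [PowerSeries.coeff_C_mul, PowerSeries.coeff_X_pow, mul_ite, mul_one, mul_zero]
  rcases le_or_gt q n with h | h
  · rw [Finset.sum_eq_single q]
    · simp
    · intro k _ hk; simp [Ne.symm hk]
    · intro hq; exact absurd (Finset.mem_range.2 (Nat.lt_succ_of_le h)) hq
  · rw [Finset.sum_eq_zero, Nat.choose_eq_zero_of_lt h]
    · simp
    · intro k hk
      have : q ≠ k := by rw [Finset.mem_range] at hk; omega
      simp [this]

/-- Key alternating binomial identity, obtained by comparing coefficients in
`(∑ C(a+n,a) Xⁿ) · (1−X)^(a+1) = 1`. -/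
lemma key_identity (a j : ℕ) (hj : 1 ≤ j) :
    ∑ i ∈ Finset.range (j + 1),
      (-1 : ℤ) ^ (j - i) * ((a + 1).choose (j - i)) * ((a + i).choose i) = 0 := by
  have h := PowerSeries.mk_add_choose_mul_one_sub_pow_eq_one (S := ℤ) (d := a)
  have h2 := congrArg (PowerSeries.coeff (R := ℤ) j) h
  rw [PowerSeries.coeff_mul, PowerSeries.coeff_one, if_neg (by omega)] at h2
  rw [Finset.Nat.sum_antidiagonal_eq_sum_range_succ_mk] at h2
  simp only [PowerSeries.coeff_mk, coeff_one_sub_pow] at h2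
  rw [← h2]
  refine Finset.sum_congr rfl fun i hi => ?_
  rw [Finset.mem_range] at hi
  have : (a + i).choose i = (a + i).choose a := by rw [Nat.choose_symm_add, Nat.add_comm a i]
  rw [this]; ring

lemma iC_nat (n k : ℕ) (h : k ≤ n) : iC (n : ℤ) (k : ℤ) = (n.choose k : ℤ) := by
  unfold iC
  rw [if_pos ⟨Int.natCast_nonneg k, by exact_mod_cast h⟩]
  simp

lemma iC_eval (a j i : ℕ) (h : i < j) :
    iC ((a : ℤ) + 1) ((a : ℤ) + i - j + 1) = ((a + 1).choose (j - i) : ℤ) := by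
  rcases le_or_gt j (a + i + 1) with hle | hlt
  · have e1 : ((a : ℤ) + 1) = ((a + 1 : ℕ) : ℤ) := by push_cast; ring
    have e2 : ((a : ℤ) + i - j + 1) = ((a + i + 1 - j : ℕ) : ℤ) := by
      push_cast [Nat.cast_sub (by omega : j ≤ a + i + 1)]; ring
    rw [e1, e2, iC_nat _ _ (by omega)]
    congr 1
    have : a + i + 1 - j = (a + 1) - (j - i) := by omega
    rw [this, Nat.choose_symm (by omega)]
  · unfold iC
    rw [if_neg (by omega)]
    rw [Nat.choose_eq_zero_of_lt (by omega)]
    simp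

/-- **The sequence `β_j` of Lemma 3.7.** Let `b, c, m` be nonnegative integers with
`m + c ≤ b` (i.e. `m ≤ b − c`). If `(β_j)_{0 ≤ j ≤ c}` satisfies `β_0 = 1`,
`β_1 = −C(b−m−c+1, 1) = −(b−m−c+1)`, and for `2 ≤ j ≤ c`,
`β_j = −Σ_{l=c−j+1}^{c} C(b−m−c+1, b−m−(j+l−1)) β_{c−l}`, then
`β_j = (−1)^j C(b−m−c+j, j)` for all `0 ≤ j ≤ c`. -/
theorem stmt_19 (b c m : ℕ) (hmc : m + c ≤ b) (β : ℕ → ℤ)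
    (h0 : β 0 = 1)
    (h1 : 1 ≤ c → β 1 = -((b : ℤ) - m - c + 1))
    (hrec : ∀ j : ℕ, 2 ≤ j → j ≤ c →
      β j = -∑ l ∈ Finset.Icc (c - j + 1) c,
        iC ((b : ℤ) - m - c + 1) ((b : ℤ) - m - ((j : ℤ) + l - 1)) * β (c - l)) :
    ∀ j : ℕ, j ≤ c → β j = (-1 : ℤ) ^ j * iC ((b : ℤ) - m - c + j) (j : ℤ) := by
  set a : ℕ := b - (m + c) with ha_def
  have ha : (b : ℤ) - m - c = (a : ℤ) := by
    rw [ha_def]; push_cast [Nat.cast_sub hmc]; ring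
  -- first prove the clean statement with Nat.choose
  have main : ∀ j : ℕ, j ≤ c → β j = (-1 : ℤ) ^ j * ((a + j).choose j : ℤ) := by
    intro j
    induction j using Nat.strong_induction_on with
    | _ j ih =>
      intro hj
      match j, hj with
      | 0, _ => simpa using h0
      | 1, hj =>
        rw [h1 hj, ha]
        rw [Nat.choose_one_right]
        push_cast; ring
      | (j + 2), hj =>
        set J := j + 2 with hJ
        have hJ2 : 2 ≤ J := by omega
        rw [hrec J hJ2 hj]
        have hsum : ∑ l ∈ Finset.Icc (c - J + 1) c,
            iC ((b : ℤ) - m - c + 1) ((b : ℤ) - m - ((J : ℤ) + l - 1)) * β (c - l)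
            = ∑ i ∈ Finset.range J, ((a + 1).choose (J - i) : ℤ) * β i := by
          refine Finset.sum_nbij' (fun l => c - l) (fun i => c - i)
            (fun l hl => ?_) (fun i hi => ?_) (fun l hl => ?_) (fun i hi => ?_)
            (fun l hl => ?_)
          · show c - l ∈ Finset.range J
            rw [Finset.mem_Icc] at hl; rw [Finset.mem_range]; omega
          · show c - i ∈ Finset.Icc (c - J + 1) c
            rw [Finset.mem_range] at hi; rw [Finset.mem_Icc]; omega
          · show c - (c - l) = l
            rw [Finset.mem_Icc] at hl; omega
          · show c - (c - i) = i
            rw [Finset.mem_range] at hi; omega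
          · show iC ((b : ℤ) - m - c + 1) ((b : ℤ) - m - ((J : ℤ) + l - 1)) * β (c - l)
              = ((a + 1).choose (J - (c - l)) : ℤ) * β (c - l)
            rw [Finset.mem_Icc] at hl
            congr 1
            have hi : c - l < J := by omega
            have harg : ((b : ℤ) - m - ((J : ℤ) + l - 1)) = ((a : ℤ) + (c - l : ℕ) - J + 1) := by
              have : ((c - l : ℕ) : ℤ) = (c : ℤ) - l := by
                push_cast [Nat.cast_sub (by omega : l ≤ c)]; ring
              rw [this]
              have : (b : ℤ) - m = (a : ℤ) + c := by linarith [ha]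
              omega
            rw [harg, ha]
            exact iC_eval a J (c - l) hi
        rw [hsum]
        have hrw : ∑ i ∈ Finset.range J, ((a + 1).choose (J - i) : ℤ) * β i
            = (-1 : ℤ) ^ J * ∑ i ∈ Finset.range J,
                (-1 : ℤ) ^ (J - i) * ((a + 1).choose (J - i)) * ((a + i).choose i) := by
          rw [Finset.mul_sum]
          refine Finset.sum_congr rfl fun i hi => ?_
          rw [Finset.mem_range] at hi
          rw [ih i (by omega) (by omega)]
          have hsign : (-1 : ℤ) ^ J = (-1 : ℤ) ^ (J - i) * (-1 : ℤ) ^ i := by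
            rw [← pow_add]; congr 1; omega
          have hsq : (-1 : ℤ) ^ (J - i) * (-1 : ℤ) ^ (J - i) = 1 := by
            rw [← pow_add]; exact Even.neg_one_pow ⟨J - i, rfl⟩
          rw [hsign]
          linear_combination (-(-1 : ℤ) ^ i * ((a + 1).choose (J - i)) * ((a + i).choose i)) * hsq
        rw [hrw]
        have hkey := key_identity a J (by omega)
        rw [Finset.sum_range_succ] at hkey
        simp only [Nat.sub_self, pow_zero, one_mul, Nat.choose_zero_right, Nat.cast_one] at hkey
        have : ∑ i ∈ Finset.range J,
            (-1 : ℤ) ^ (J - i) * ((a + 1).choose (J - i)) * ((a + i).choose i)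
            = -((a + J).choose J : ℤ) := by linarith
        rw [this]; ring
  intro j hj
  rw [main j hj, ha]
  have : ((a : ℤ) + j) = ((a + j : ℕ) : ℤ) := by push_cast; ring
  rw [this, iC_nat _ _ (by omega)]
end
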